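/- arXiv:2407.19091 — 3 statements merged into one kernel-verified Lean document; each statement's English description precedes it below -/
import Mathlib

section
/- Let T be a continuous linear operator on a Fréchet space X and let NS(T) := { x ∈ X : the sequence (Tⁿx)_{n∈ℕ} has a subsequence converging to zero }. Then exactly one of the following holds: (a) the set of irregular vectors of T is residual in X; (b) lim_{n→∞} Tⁿx = 0 for every x ∈ X; (c) NS(T) is not dense in X. Moreover: (A) if NS(T) is not closed in X, then T is Li-Yorke chaotic; and (B) if X is separable and NS(T) is dense and not closed in X, then T is densely Li-Yorke chaotic. -/
open Filter Topology MeasureTheory ENNReal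

noncomputable section

def LiYorkePair {M : Type*} [PseudoMetricSpace M] (g : M → M) (x y : M) : Prop :=
  Filter.liminf (fun n : ℕ => edist (g^[n] x) (g^[n] y)) Filter.atTop = 0 ∧
  0 < Filter.limsup (fun n : ℕ => edist (g^[n] x) (g^[n] y)) Filter.atTop

def LiYorkeChaotic {M : Type*} [PseudoMetricSpace M] (g : M → M) : Prop :=
  ∃ S : Set M, ¬ S.Countable ∧ S.Pairwise (LiYorkePair g)

def DenselyLiYorkeChaotic {M : Type*} [PseudoMetricSpace M] (g : M → M) : Prop :=
  ∃ S : Set M, Dense S ∧ ¬ S.Countable ∧ S.Pairwise (LiYorkePair g)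

/-- The set of vectors whose orbit under `g` has a subsequence converging to zero. -/
def NSset {X : Type*} [TopologicalSpace X] [Zero X] (g : X → X) : Set X :=
  {x | ∃ n : ℕ → ℕ, StrictMono n ∧ Tendsto (fun j => g^[n j] x) atTop (nhds 0)}

/-- An irregular vector: the orbit is unbounded (in the von Neumann sense) but has a
subsequence converging to zero. -/
def IrregularVector (𝕂 : Type*) {X : Type*} [NormedField 𝕂] [AddCommGroup X]
    [Module 𝕂 X] [TopologicalSpace X] (g : X → X) (x : X) : Prop :=
  ¬ Bornology.IsVonNBounded 𝕂 (Set.range fun n : ℕ => g^[n] x) ∧ x ∈ NSset g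



open Pointwise
set_option linter.unusedSectionVars false
set_option linter.unnecessarySimpa false

section A
variable {𝕂 X : Type} [RCLike 𝕂] [AddCommGroup X] [Module 𝕂 X]
  [MetricSpace X] [CompleteSpace X] [ContinuousAdd X] [ContinuousSMul 𝕂 X]

theorem tag (𝕂 : Type) [RCLike 𝕂] [Module 𝕂 X] [ContinuousSMul 𝕂 X] :
    IsTopologicalAddGroup X := by
  refine { continuous_neg := ?_ }
  have h : (fun x : X => (-1 : 𝕂) • x) = fun x => -x := funext fun x => neg_one_smul 𝕂 x
  have : Continuous fun x : X => (-1 : 𝕂) • x := continuous_const_smul _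
  rwa [h] at this

variable (T : X →L[𝕂] X)

theorem iter_add (n : ℕ) (x y : X) : (⇑T)^[n] (x + y) = (⇑T)^[n] x + (⇑T)^[n] y := by
  induction n with
  | zero => simp
  | succ n ih => simp [Function.iterate_succ_apply', ih, map_add]

theorem iter_zero (n : ℕ) : (⇑T)^[n] (0 : X) = 0 := by
  induction n with
  | zero => simp
  | succ n ih => simp [Function.iterate_succ_apply', ih]

theorem iter_smul (n : ℕ) (c : 𝕂) (x : X) : (⇑T)^[n] (c • x) = c • (⇑T)^[n] x := by
  induction n with
  | zero => simp
  | succ n ih => simp [Function.iterate_succ_apply', ih, _root_.map_smul]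

theorem iter_neg (n : ℕ) (x : X) : (⇑T)^[n] (-x) = -(⇑T)^[n] x := by
  have := iter_smul T n (-1 : 𝕂) x
  simpa [neg_one_smul] using this

theorem iter_sub (n : ℕ) (x y : X) : (⇑T)^[n] (x - y) = (⇑T)^[n] x - (⇑T)^[n] y := by
  rw [sub_eq_add_neg, iter_add, iter_neg, ← sub_eq_add_neg]

variable (hinv : ∀ x y z : X, dist (x + z) (y + z) = dist x y)

include hinv in
theorem dist_sub_zero (a b : X) : dist a b = dist (a - b) 0 := by
  have := hinv (a - b) 0 b
  simpa using this

include hinv in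
theorem dist_neg_zero (a : X) : dist (-a) 0 = dist a 0 := by
  have h : dist 0 a = dist (-a) 0 := by simpa using hinv (-a) 0 a
  rw [← h, dist_comm]

include hinv in
theorem dist_add_zero_le (a b : X) : dist (a + b) 0 ≤ dist a 0 + dist b 0 := by
  have h1 : dist (a + b) b = dist a 0 := by
    have := hinv a 0 b; simpa using this
  calc dist (a + b) 0 ≤ dist (a + b) b + dist b 0 := dist_triangle _ _ _
    _ = dist a 0 + dist b 0 := by rw [h1]

end A

section B
variable {𝕂 X : Type} [RCLike 𝕂] [AddCommGroup X] [Module 𝕂 X]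
  [MetricSpace X] [CompleteSpace X] [ContinuousAdd X] [ContinuousSMul 𝕂 X]
variable (T : X →L[𝕂] X)

/-- The set of vectors whose orbit tends to zero. -/
def Dset : Set X := {x | Tendsto (fun n : ℕ => (⇑T)^[n] x) atTop (𝓝 0)}

theorem Dset_subset_NS : Dset T ⊆ NSset ⇑T := by
  intro x hx
  exact ⟨id, strictMono_id, hx⟩

theorem mem_NS_iff {x : X} :
    x ∈ NSset ⇑T ↔ ∀ ε > 0, ∃ᶠ n in atTop, dist ((⇑T)^[n] x) 0 < ε := by
  constructor
  · rintro ⟨φ, hφ, hten⟩ ε hε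
    rw [Metric.tendsto_atTop] at hten
    obtain ⟨N, hN⟩ := hten ε hε
    rw [frequently_atTop]
    intro a
    refine ⟨φ (max N a), le_trans (le_max_right N a) hφ.le_apply, hN _ (le_max_left N a)⟩
  · intro h
    have h' : ∀ k : ℕ, ∃ᶠ n in atTop, dist ((⇑T)^[n] x) 0 < 1 / (k + 1) := by
      intro k
      exact h _ (by positivity)
    obtain ⟨φ, hφ, hP⟩ := Filter.extraction_forall_of_frequently h'
    refine ⟨φ, hφ, ?_⟩
    rw [Metric.tendsto_atTop]
    intro ε hε
    obtain ⟨N, hN⟩ := exists_nat_one_div_lt hε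
    refine ⟨N, fun n hn => ?_⟩
    refine lt_of_lt_of_le (lt_of_lt_of_le (hP n) ?_) hN.le
    apply one_div_le_one_div_of_le (by positivity)
    exact_mod_cast by exact_mod_cast add_le_add_left (Nat.cast_le.2 hn) 1

theorem not_mem_NS_iff {x : X} :
    x ∉ NSset ⇑T ↔ ∃ ε > 0, ∀ᶠ n in atTop, ε ≤ dist ((⇑T)^[n] x) 0 := by
  rw [mem_NS_iff]
  push_neg
  constructor
  · rintro ⟨ε, hε, h⟩
    exact ⟨ε, hε, by simpa [not_lt] using h⟩
  · rintro ⟨ε, hε, h⟩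
    refine ⟨ε, hε, ?_⟩
    simpa [not_lt] using h

theorem NS_residual (hd : Dense (NSset ⇑T)) : NSset ⇑T ∈ residual X := by
  have hA : ∀ k m : ℕ,
      (⋃ n, ⋃ _ : m ≤ n, (fun y => dist ((⇑T)^[n] y) 0) ⁻¹' Set.Iio (1 / (k + 1)))
        ∈ residual X := by
    intro k m
    apply residual_of_dense_open
    · exact isOpen_iUnion fun n => isOpen_iUnion fun _ =>
        (continuous_dist.comp ((T.continuous.iterate n).prodMk continuous_const)).isOpen_preimage
          _ isOpen_Iio
    · apply hd.mono
      intro x hx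
      have := ((mem_NS_iff T).1 hx) (1 / (k + 1)) (by positivity)
      rw [frequently_atTop] at this
      obtain ⟨n, hn, hlt⟩ := this m
      exact Set.mem_iUnion.2 ⟨n, Set.mem_iUnion.2 ⟨hn, hlt⟩⟩
  have hEq : NSset ⇑T = ⋂ k : ℕ, ⋂ m : ℕ,
      (⋃ n, ⋃ _ : m ≤ n, (fun y => dist ((⇑T)^[n] y) 0) ⁻¹' Set.Iio (1 / (k + 1))) := by
    ext x
    simp only [Set.mem_iInter, Set.mem_iUnion, Set.mem_preimage, Set.mem_Iio]
    rw [mem_NS_iff]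
    constructor
    · intro h k m
      have := h (1 / (k + 1)) (by positivity)
      rw [frequently_atTop] at this
      obtain ⟨n, hn, hlt⟩ := this m
      exact ⟨n, hn, hlt⟩
    · intro h ε hε
      obtain ⟨K, hK⟩ := exists_nat_one_div_lt hε
      rw [frequently_atTop]
      intro m
      obtain ⟨n, hn, hlt⟩ := h K m
      exact ⟨n, hn, hlt.trans hK⟩
  rw [hEq]
  rw [countable_iInter_mem]
  intro k
  rw [countable_iInter_mem]
  exact hA k

end B



section C
variable {𝕂 X : Type} [RCLike 𝕂] [AddCommGroup X] [Module 𝕂 X]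
  [MetricSpace X] [CompleteSpace X] [ContinuousAdd X] [ContinuousSMul 𝕂 X]
variable (T : X →L[𝕂] X)

/-- Equicontinuity of the iterates of `T`. -/
def Equi : Prop := ∀ V ∈ 𝓝 (0:X), ∃ O ∈ 𝓝 (0:X), ∀ (n : ℕ), ∀ u ∈ O, (⇑T)^[n] u ∈ V

theorem closure_subset_add (𝕂 : Type) [RCLike 𝕂] [Module 𝕂 X] [ContinuousSMul 𝕂 X]
    (s : Set X) {W : Set X} (hW : W ∈ 𝓝 (0:X)) : closure s ⊆ s + W := by
  haveI := tag (X := X) 𝕂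
  intro x hx
  have hcont : Continuous fun z : X => -z + x := by continuity
  have ht : (fun z : X => -z + x) ⁻¹' W ∈ 𝓝 x := by
    apply hcont.continuousAt.preimage_mem_nhds
    simpa using hW
  obtain ⟨y, hy1, hy2⟩ := mem_closure_iff_nhds.1 hx _ ht
  exact ⟨y, hy2, -y + x, hy1, add_neg_cancel_left y x⟩

/-- The set of points with von Neumann bounded orbit. -/
def BddSet : Set X := {x : X | Bornology.IsVonNBounded 𝕂 (Set.range fun n : ℕ => (⇑T)^[n] x)}

theorem equi_of_not_meagre (h : ¬ IsMeagre (BddSet T)) : Equi T := by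
  intro V hV
  obtain ⟨V₁, hV₁, hV₁V⟩ := exists_nhds_zero_half hV
  obtain ⟨U₁, hU₁, hU₁V⟩ := exists_nhds_zero_half hV₁
  set U : Set X := balancedCore 𝕂 U₁ with hUdef
  have hU : U ∈ 𝓝 (0:X) := balancedCore_mem_nhds_zero hU₁
  have hUbal : Balanced 𝕂 U := balancedCore_balanced _
  set Ub : Set X := closure U with hUbdef
  have hUbbal : Balanced 𝕂 Ub := hUbal.closure
  have hUbV₁ : Ub ⊆ V₁ := by
    refine (closure_subset_add 𝕂 U hU₁).trans ?_
    intro z hz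
    obtain ⟨a, ha, b, hb, rfl⟩ := hz
    exact hU₁V a (balancedCore_subset _ ha) b hb
  set F : Set X := ⋂ n : ℕ, (⇑T)^[n] ⁻¹' Ub with hFdef
  have hFc : IsClosed F :=
    isClosed_iInter fun n => isClosed_closure.preimage (T.continuous.iterate n)
  have hBsub : BddSet T ⊆ ⋃ k : ℕ, (((k+1 : ℕ) : 𝕂)) • F := by
    intro x hx
    have habs := hx hU
    obtain ⟨r, hr⟩ := absorbs_iff_norm.1 habs
    obtain ⟨k, hk⟩ := exists_nat_ge r
    have hknz : (((k+1 : ℕ) : 𝕂)) ≠ 0 := Nat.cast_ne_zero.2 (Nat.succ_ne_zero k)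
    have hsub : (Set.range fun n : ℕ => (⇑T)^[n] x) ⊆ (((k+1 : ℕ) : 𝕂)) • U := by
      have hnorm : r ≤ ‖((k+1 : ℕ) : 𝕂)‖ := by
        rw [RCLike.norm_natCast]
        push_cast
        linarith
      exact hr _ hnorm
    refine Set.mem_iUnion.2 ⟨k, ?_⟩
    rw [Set.mem_smul_set_iff_inv_smul_mem₀ hknz]
    refine Set.mem_iInter.2 fun n => ?_
    rw [Set.mem_preimage, iter_smul]
    apply subset_closure
    have := hsub (Set.mem_range_self n)
    rwa [Set.mem_smul_set_iff_inv_smul_mem₀ hknz] at this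
  have hex : ∃ k : ℕ, ¬ IsMeagre ((((k+1 : ℕ) : 𝕂)) • F) := by
    by_contra hall
    push_neg at hall
    exact h ((isMeagre_iUnion hall).mono hBsub)
  obtain ⟨k, hk⟩ := hex
  set c : 𝕂 := ((k+1 : ℕ) : 𝕂) with hcdef
  have hcnz : c ≠ 0 := Nat.cast_ne_zero.2 (Nat.succ_ne_zero k)
  have hGc : IsClosed (c • F) := by
    have : c • F = (Homeomorph.smulOfNeZero c hcnz) '' F := by
      simp only [Homeomorph.smulOfNeZero, Homeomorph.smul, Homeomorph.homeomorph_mk_coe,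
        Equiv.smul]
      rfl
    rw [this]
    exact (Homeomorph.isClosed_image _).2 hFc
  have hint : (interior (c • F)).Nonempty := by
    rw [Set.nonempty_iff_ne_empty]
    intro hemp
    apply hk
    rw [isMeagre_iff_countable_union_isNowhereDense]
    exact ⟨{c • F}, by simpa [hGc.isNowhereDense_iff] using hemp,
      Set.countable_singleton _, by simp⟩
  obtain ⟨x₀, hx₀⟩ := hint
  have hcont : Continuous fun u : X => x₀ + c • u :=
    continuous_const.add (continuous_const_smul c)
  refine ⟨(fun u : X => x₀ + c • u) ⁻¹' (interior (c • F)),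
    hcont.continuousAt.preimage_mem_nhds (by simpa using (isOpen_interior.mem_nhds hx₀)), ?_⟩
  intro n u hu
  have h1 : x₀ + c • u ∈ c • F := interior_subset hu
  have h0 : x₀ ∈ c • F := interior_subset hx₀
  obtain ⟨a₁, ha₁, hca₁⟩ := h1
  obtain ⟨a₀, ha₀, hca₀⟩ := h0
  have hu_eq : u = a₁ - a₀ := by
    have : c • (a₁ - a₀) = c • u := by
      rw [smul_sub, show (c • a₁ : X) = x₀ + c • u from hca₁, show (c • a₀ : X) = x₀ from hca₀]
      abel
    have := congrArg (fun w => c⁻¹ • w) this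
    simpa [inv_smul_smul₀ hcnz] using this.symm
  have hmem : ∀ b ∈ F, (⇑T)^[n] b ∈ Ub := fun b hb => Set.mem_iInter.1 hb n
  have hTa₁ : (⇑T)^[n] a₁ ∈ Ub := hmem a₁ ha₁
  have hTa₀ : (⇑T)^[n] a₀ ∈ Ub := hmem a₀ ha₀
  have : (⇑T)^[n] u = (⇑T)^[n] a₁ + -((⇑T)^[n] a₀) := by
    rw [hu_eq, iter_sub]; abel
  rw [this]
  exact hV₁V _ (hUbV₁ hTa₁) _ (hUbV₁ (hUbbal.neg_mem_iff.2 hTa₀))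

theorem tendsto_of_equi_NS (hE : Equi T) {x : X} (hx : x ∈ NSset ⇑T) : x ∈ Dset T := by
  rw [Dset, Set.mem_setOf_eq, Filter.tendsto_def]
  intro V hV
  obtain ⟨O, hO, hOV⟩ := hE V hV
  obtain ⟨φ, hφ, hten⟩ := hx
  have : ∀ᶠ j in atTop, (⇑T)^[φ j] x ∈ O := hten (by exact hO)
  obtain ⟨j, hj⟩ := this.exists
  rw [mem_atTop_sets]
  refine ⟨φ j, fun m hm => ?_⟩
  have : (⇑T)^[m] x = (⇑T)^[m - φ j] ((⇑T)^[φ j] x) := by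
    rw [← Function.iterate_add_apply, Nat.sub_add_cancel hm]
  rw [Set.mem_preimage, this]
  exact hOV _ _ hj

theorem dense_closed_of_equi (hE : Equi T) : IsClosed (Dset T) := by
  haveI := tag (X := X) 𝕂
  rw [← closure_subset_iff_isClosed]
  intro x hx
  rw [Dset, Set.mem_setOf_eq, Filter.tendsto_def]
  intro V hV
  obtain ⟨V₁, hV₁, hV₁V⟩ := exists_nhds_zero_half hV
  obtain ⟨O, hO, hOV⟩ := hE V₁ hV₁
  have hcont : Continuous fun z : X => x - z := by continuity
  have ht : (fun z : X => x - z) ⁻¹' O ∈ 𝓝 x := by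
    apply hcont.continuousAt.preimage_mem_nhds
    simpa using hO
  obtain ⟨y, hy1, hy2⟩ := mem_closure_iff_nhds.1 hx _ ht
  have hyt : ∀ᶠ n in atTop, (⇑T)^[n] y ∈ V₁ := hy2 hV₁
  filter_upwards [hyt] with n hn
  have heq : (⇑T)^[n] x = (⇑T)^[n] (x - y) + (⇑T)^[n] y := by
    rw [← iter_add, sub_add_cancel]
  show (⇑T)^[n] x ∈ V
  rw [heq]
  exact hV₁V _ (hOV n _ hy1) _ hn

theorem NS_eq_dset_of_equi (hE : Equi T) : NSset ⇑T = Dset T :=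
  Set.Subset.antisymm (fun _ hx => tendsto_of_equi_NS T hE hx) (Dset_subset_NS T)

theorem all_tendsto_of_equi_dense (hE : Equi T) (hd : Dense (NSset ⇑T)) (x : X) :
    Tendsto (fun n : ℕ => (⇑T)^[n] x) atTop (𝓝 0) := by
  have h1 : NSset ⇑T ⊆ Dset T := fun _ hx => tendsto_of_equi_NS T hE hx
  have h2 : Dense (Dset T) := hd.mono h1
  have := (dense_closed_of_equi T hE).closure_eq
  have : x ∈ Dset T := by
    rw [← this, h2.closure_eq]
    trivial
  exact this

end C



section D
variable {𝕂 X : Type} [RCLike 𝕂] [AddCommGroup X] [Module 𝕂 X]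
  [MetricSpace X] [CompleteSpace X] [ContinuousAdd X] [ContinuousSMul 𝕂 X]
variable (T : X →L[𝕂] X)

theorem bdd_of_tendsto {x : X} (hx : x ∈ Dset T) : x ∈ BddSet T := by
  intro V hV
  set U : Set X := balancedCore 𝕂 V with hUdef
  have hU : U ∈ 𝓝 (0:X) := balancedCore_mem_nhds_zero hV
  obtain ⟨N, hN⟩ := (Filter.eventually_atTop).1 (hx hU)
  have hsub : (Set.range fun n : ℕ => (⇑T)^[n] x) ⊆ (⋃ i : Fin N, {(⇑T)^[i.1] x}) ∪ U := by
    rintro _ ⟨n, rfl⟩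
    rcases lt_or_ge n N with h | h
    · exact Or.inl (Set.mem_iUnion.2 ⟨⟨n, h⟩, rfl⟩)
    · exact Or.inr (hN n h)
  have h1 : Absorbs 𝕂 V (⋃ i : Fin N, {(⇑T)^[i.1] x}) :=
    (Bornology.isVonNBounded_iUnion.2 fun i => Bornology.isVonNBounded_singleton _) hV
  have h2 : Absorbs 𝕂 V U :=
    ((balancedCore_balanced V).absorbs_self).mono_left (balancedCore_subset V)
  exact (h1.union h2).mono_right hsub

theorem irregular_eq : {x : X | IrregularVector 𝕂 (⇑T) x} = (BddSet T)ᶜ ∩ NSset ⇑T := rfl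

theorem freq_of_subseq {P : ℕ → Prop} {φ : ℕ → ℕ} (hφ : StrictMono φ)
    (h : ∀ᶠ j in atTop, P (φ j)) : ∃ᶠ n in atTop, P n := by
  rw [frequently_atTop]
  intro a
  obtain ⟨N, hN⟩ := eventually_atTop.1 h
  exact ⟨φ (max N a), le_trans (le_max_right _ _) hφ.le_apply, hN _ (le_max_left _ _)⟩

theorem not_tendsto_of_unbdd {x : X} (hx : x ∉ BddSet T) :
    ¬ Tendsto (fun n : ℕ => (⇑T)^[n] x) atTop (𝓝 0) :=
  fun h => hx (bdd_of_tendsto T h)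

/-- The main hard case of the trichotomy. -/
theorem irregular_residual (hd : Dense (NSset ⇑T))
    (hnb : ¬ ∀ x : X, Tendsto (fun n : ℕ => (⇑T)^[n] x) atTop (𝓝 0)) :
    {x : X | IrregularVector 𝕂 (⇑T) x} ∈ residual X := by
  have hub : (BddSet T)ᶜ ∈ residual X := by
    by_contra hres
    have hnm : ¬ IsMeagre (BddSet T) := hres
    exact hnb (all_tendsto_of_equi_dense T (equi_of_not_meagre T hnm) hd)
  rw [irregular_eq]
  exact Filter.inter_mem hub (NS_residual T hd)

end D

section E
variable {𝕂 X : Type} [RCLike 𝕂] [AddCommGroup X] [Module 𝕂 X]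
  [MetricSpace X] [CompleteSpace X] [ContinuousAdd X] [ContinuousSMul 𝕂 X]
variable (T : X →L[𝕂] X)
variable (hinv : ∀ x y z : X, dist (x + z) (y + z) = dist x y)

include hinv in
theorem edist_iter (a b : X) (n : ℕ) :
    edist ((⇑T)^[n] a) ((⇑T)^[n] b) = ENNReal.ofReal (dist ((⇑T)^[n] (a - b)) 0) := by
  rw [edist_dist, dist_sub_zero hinv, iter_sub]

include hinv in
theorem liYorkePair_of {a b : X} (h1 : a - b ∈ NSset ⇑T)
    (h2 : ¬ Tendsto (fun n : ℕ => (⇑T)^[n] (a - b)) atTop (𝓝 0)) : LiYorkePair ⇑T a b := by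
  constructor
  · -- liminf = 0
    obtain ⟨φ, hφ, hten⟩ := h1
    have hdist : Tendsto (fun j => dist ((⇑T)^[φ j] (a - b)) 0) atTop (𝓝 0) :=
      tendsto_iff_dist_tendsto_zero.1 hten
    refine le_antisymm ?_ zero_le
    refine ENNReal.le_of_forall_pos_le_add fun ε hε _ => ?_
    rw [zero_add]
    apply Filter.liminf_le_of_frequently_le'
    have hev : ∀ᶠ j in atTop, dist ((⇑T)^[φ j] (a - b)) 0 < (ε : ℝ) := by
      obtain ⟨N, hN⟩ := Metric.tendsto_atTop.1 hdist (ε : ℝ) (by exact_mod_cast hε)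
      filter_upwards [eventually_ge_atTop N] with j hj
      have := hN j hj
      rwa [Real.dist_eq, sub_zero, abs_of_nonneg dist_nonneg] at this
    have hfreq : ∃ᶠ n in atTop, dist ((⇑T)^[n] (a - b)) 0 < (ε : ℝ) :=
      freq_of_subseq hφ hev
    apply hfreq.mono
    intro n hn
    rw [edist_iter T hinv, ← ENNReal.ofReal_coe_nnreal]
    exact ENNReal.ofReal_le_ofReal hn.le
  · -- limsup > 0
    rw [pos_iff_ne_zero]
    intro hzero
    apply h2
    have hlim : liminf (fun n : ℕ => edist ((⇑T)^[n] a) ((⇑T)^[n] b)) atTop = 0 :=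
      le_antisymm (hzero ▸ liminf_le_limsup) zero_le
    have htend : Tendsto (fun n : ℕ => edist ((⇑T)^[n] a) ((⇑T)^[n] b)) atTop (𝓝 0) :=
      tendsto_of_liminf_eq_limsup hlim hzero
    have htoReal : Tendsto (fun n : ℕ => dist ((⇑T)^[n] (a - b)) 0) atTop (𝓝 0) := by
      have hcomp : Tendsto (fun n : ℕ =>
          ENNReal.ofReal (dist ((⇑T)^[n] (a - b)) 0)) atTop (𝓝 0) := by
        convert htend using 2 with n
        rw [edist_iter T hinv]
      have h3 := (ENNReal.tendsto_toReal (by simp : (0:ℝ≥0∞) ≠ ⊤)).comp hcomp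
      have h4 : (ENNReal.toReal ∘ fun n : ℕ => ENNReal.ofReal (dist ((⇑T)^[n] (a - b)) 0))
          = fun n : ℕ => dist ((⇑T)^[n] (a - b)) 0 :=
        funext fun n => by simp [ENNReal.toReal_ofReal dist_nonneg]
      rw [h4] at h3
      simpa using h3
    exact tendsto_iff_dist_tendsto_zero.2 htoReal

end E



section F
variable {𝕂 X : Type} [RCLike 𝕂] [AddCommGroup X] [Module 𝕂 X]
  [MetricSpace X] [CompleteSpace X] [ContinuousAdd X] [ContinuousSMul 𝕂 X]
variable (T : X →L[𝕂] X)
variable (hinv : ∀ x y z : X, dist (x + z) (y + z) = dist x y)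

theorem Dset_zero : (0 : X) ∈ Dset T := by
  have : (fun n : ℕ => (⇑T)^[n] (0:X)) = fun _ => (0:X) := funext fun n => iter_zero T n
  rw [Dset, Set.mem_setOf_eq, this]
  exact tendsto_const_nhds

theorem Dset_add {a b : X} (ha : a ∈ Dset T) (hb : b ∈ Dset T) : a + b ∈ Dset T := by
  have : (fun n : ℕ => (⇑T)^[n] (a + b))
      = fun n : ℕ => (⇑T)^[n] a + (⇑T)^[n] b := funext fun n => iter_add T n a b
  rw [Dset, Set.mem_setOf_eq, this]
  simpa using ha.add hb

theorem Dset_sub {a b : X} (ha : a ∈ Dset T) (hb : b ∈ Dset T) : a - b ∈ Dset T := by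
  haveI := tag (X := X) 𝕂
  have : (fun n : ℕ => (⇑T)^[n] (a - b))
      = fun n : ℕ => (⇑T)^[n] a - (⇑T)^[n] b := funext fun n => iter_sub T n a b
  rw [Dset, Set.mem_setOf_eq, this]
  simpa using ha.sub hb

include hinv in
theorem dist_add_zero_ge (a b : X) : dist b 0 - dist a 0 ≤ dist (a + b) 0 := by
  have h : dist b 0 ≤ dist (-a) 0 + dist (a + b) 0 := by
    have := dist_add_zero_le hinv (-a) (a + b)
    simpa using this
  rw [dist_neg_zero hinv] at h
  linarith

include hinv in
theorem exists_semi_irregular (hNC : ¬ IsClosed (NSset ⇑T)) :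
    ∃ z, z ∈ NSset ⇑T ∧ ¬ Tendsto (fun n : ℕ => (⇑T)^[n] z) atTop (𝓝 0) := by
  by_contra hcon
  push_neg at hcon
  have hND : NSset ⇑T = Dset T :=
    Set.Subset.antisymm (fun z hz => hcon z hz) (Dset_subset_NS T)
  obtain ⟨y, hyCl, hyN⟩ : ∃ y, y ∈ closure (NSset ⇑T) ∧ y ∉ NSset ⇑T := by
    by_contra h
    push_neg at h
    exact hNC (isClosed_of_closure_subset h)
  obtain ⟨ε, hε, hev⟩ := (not_mem_NS_iff T).1 hyN
  have hyD : y ∈ closure (Dset T) := hND ▸ hyCl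
  -- the inductive step
  have key : ∀ (k : ℕ) (c : X) (M : ℕ), ((Even k → c ∈ Dset T) ∧ (¬Even k → c - y ∈ Dset T)) →
      ∃ s' : X × ℕ, ((Even (k+1) → s'.1 ∈ Dset T) ∧ (¬Even (k+1) → s'.1 - y ∈ Dset T)) ∧
        M < s'.2 ∧ (∀ m ≤ M, dist ((⇑T)^[m] (s'.1 - c)) 0 ≤ (1/2 : ℝ)^k) ∧
        (Even (k+1) → dist ((⇑T)^[s'.2] s'.1) 0 ≤ (1/2 : ℝ)^k) ∧
        (¬Even (k+1) → ε/2 ≤ dist ((⇑T)^[s'.2] s'.1) 0) := by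
    intro k c M hP
    -- find x ∈ Dset close to y along times ≤ M
    have hW : (⋂ m ∈ Finset.range (M+1),
        {x : X | dist ((⇑T)^[m] x) ((⇑T)^[m] y) < (1/2 : ℝ)^k}) ∈ 𝓝 y := by
      rw [Filter.biInter_finset_mem]
      intro m _
      have hcont : Continuous fun x : X => dist ((⇑T)^[m] x) ((⇑T)^[m] y) :=
        (continuous_dist.comp ((T.continuous.iterate m).prodMk continuous_const))
      have : {x : X | dist ((⇑T)^[m] x) ((⇑T)^[m] y) < (1/2 : ℝ)^k}
          = (fun x : X => dist ((⇑T)^[m] x) ((⇑T)^[m] y)) ⁻¹' Set.Iio ((1/2 : ℝ)^k) := rfl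
      rw [this]
      apply hcont.continuousAt.preimage_mem_nhds
      exact Iio_mem_nhds (by simpa using pow_pos (by norm_num : (0:ℝ) < 1/2) k)
    obtain ⟨x, hxW, hxD⟩ := mem_closure_iff_nhds.1 hyD _ hW
    have hxnear : ∀ m ≤ M, dist ((⇑T)^[m] x) ((⇑T)^[m] y) < (1/2 : ℝ)^k := by
      intro m hm
      have := Set.mem_iInter₂.1 hxW m (Finset.mem_range.2 (Nat.lt_succ_of_le hm))
      exact this
    rcases Nat.even_or_odd k with hk | hk
    · -- k even, k+1 odd : c' = c + (y - x)
      have hcD : c ∈ Dset T := hP.1 hk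
      have hcxD : c - x ∈ Dset T := Dset_sub T hcD hxD
      have hkodd : ¬ Even (k+1) := by simp [Nat.even_add_one, hk]
      -- choose the checkpoint
      have hsmall : ∀ᶠ m in atTop, dist ((⇑T)^[m] (c - x)) 0 < ε/2 := by
        obtain ⟨N, hN⟩ := Metric.tendsto_atTop.1 hcxD (ε/2) (by linarith)
        exact eventually_atTop.2 ⟨N, hN⟩
      obtain ⟨M', hM'⟩ := ((hsmall.and hev).and (eventually_ge_atTop (M+1))).exists
      obtain ⟨⟨h2', h3'⟩, h4'⟩ := hM'
      refine ⟨⟨c + (y - x), M'⟩, ⟨fun h => absurd h hkodd, fun _ => ?_⟩,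
        (by omega : M < M'), ?_, ?_, ?_⟩
      · have : c + (y - x) - y = c - x := by abel
        rw [this]
        exact hcxD
      · intro m hm
        have heq : c + (y - x) - c = y - x := by abel
        rw [heq, iter_sub, ← dist_sub_zero hinv]
        rw [dist_comm]
        exact (hxnear m hm).le
      · intro h; exact absurd h hkodd
      · intro _
        have heq : c + (y - x) = (c - x) + y := by abel
        rw [heq]
        have h1 : dist ((⇑T)^[M'] ((c - x) + y)) 0
            ≥ dist ((⇑T)^[M'] y) 0 - dist ((⇑T)^[M'] (c - x)) 0 := by
          rw [iter_add]
          exact dist_add_zero_ge hinv _ _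
        linarith
    · -- k odd, k+1 even : c' = c - (y - x)
      have hcyD : c - y ∈ Dset T := hP.2 (Nat.not_even_iff_odd.mpr hk)
      have hc'D : c - (y - x) ∈ Dset T := by
        have : c - (y - x) = (c - y) + x := by abel
        rw [this]
        exact Dset_add T hcyD hxD
      have hkeven : Even (k+1) := by
        rcases hk with ⟨j, hj⟩
        exact ⟨j+1, by omega⟩
      have hsmall : ∀ᶠ m in atTop, dist ((⇑T)^[m] (c - (y - x))) 0 < (1/2:ℝ)^k := by
        obtain ⟨N, hN⟩ := Metric.tendsto_atTop.1 hc'D ((1/2:ℝ)^k) (by positivity)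
        exact eventually_atTop.2 ⟨N, hN⟩
      obtain ⟨M', hM'1, hM'2⟩ := (hsmall.and (eventually_ge_atTop (M+1))).exists
      refine ⟨⟨c - (y - x), M'⟩, ⟨fun _ => hc'D, fun h => absurd hkeven h⟩,
        (by omega : M < M'), ?_, ?_, ?_⟩
      · intro m hm
        have heq : c - (y - x) - c = x - y := by abel
        rw [heq, iter_sub, ← dist_sub_zero hinv]
        exact (hxnear m hm).le
      · intro _
        exact le_of_lt hM'1
      · intro h; exact absurd hkeven h
  -- build the sequence of states by recursion
  have key' : ∀ (k : ℕ) (s : X × ℕ), ∃ s' : X × ℕ,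
      ((Even k → s.1 ∈ Dset T) ∧ (¬Even k → s.1 - y ∈ Dset T)) →
      (((Even (k+1) → s'.1 ∈ Dset T) ∧ (¬Even (k+1) → s'.1 - y ∈ Dset T)) ∧
        s.2 < s'.2 ∧ (∀ m ≤ s.2, dist ((⇑T)^[m] (s'.1 - s.1)) 0 ≤ (1/2 : ℝ)^k) ∧
        (Even (k+1) → dist ((⇑T)^[s'.2] s'.1) 0 ≤ (1/2 : ℝ)^k) ∧
        (¬Even (k+1) → ε/2 ≤ dist ((⇑T)^[s'.2] s'.1) 0)) := by
    intro k s
    by_cases h : (Even k → s.1 ∈ Dset T) ∧ (¬Even k → s.1 - y ∈ Dset T)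
    · obtain ⟨s', hs'⟩ := key k s.1 s.2 h
      exact ⟨s', fun _ => hs'⟩
    · exact ⟨s, fun hc => absurd hc h⟩
  choose f hf using key'
  set seq : ℕ → X × ℕ := fun k => Nat.rec ((0:X), (0:ℕ)) f k with hseq
  have hP : ∀ k, (Even k → (seq k).1 ∈ Dset T) ∧ (¬Even k → (seq k).1 - y ∈ Dset T) := by
    intro k
    induction k with
    | zero => exact ⟨fun _ => Dset_zero T, fun h => absurd Even.zero h⟩
    | succ k ih => exact (hf k (seq k) ih).1
  have hstep := fun k => hf k (seq k) (hP k)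
  set c : ℕ → X := fun k => (seq k).1 with hc
  set M : ℕ → ℕ := fun k => (seq k).2 with hM
  have hMlt : ∀ k, M k < M (k+1) := fun k => (hstep k).2.1
  have hMmono : StrictMono M := strictMono_nat_of_lt_succ hMlt
  have hdel : ∀ k, ∀ m ≤ M k, dist ((⇑T)^[m] (c (k+1) - c k)) 0 ≤ (1/2:ℝ)^k :=
    fun k => (hstep k).2.2.1
  have hche : ∀ k, Even (k+1) → dist ((⇑T)^[M (k+1)] (c (k+1))) 0 ≤ (1/2:ℝ)^k :=
    fun k => (hstep k).2.2.2.1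
  have hcho : ∀ k, ¬Even (k+1) → ε/2 ≤ dist ((⇑T)^[M (k+1)] (c (k+1))) 0 :=
    fun k => (hstep k).2.2.2.2
  have hcauchy : CauchySeq c := by
    apply cauchySeq_of_le_geometric (1/2 : ℝ) 1 (by norm_num)
    intro n
    rw [one_mul, dist_comm, dist_sub_zero hinv]
    have := hdel n 0 (Nat.zero_le _)
    simpa using this
  obtain ⟨z, hz⟩ := cauchySeq_tendsto_of_complete hcauchy
  have htail : ∀ k, dist ((⇑T)^[M (k+1)] z) ((⇑T)^[M (k+1)] (c (k+1))) ≤ (1/2:ℝ)^k := by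
    intro k
    have hstepdist : ∀ j, dist ((⇑T)^[M (k+1)] (c (k+1+j))) ((⇑T)^[M (k+1)] (c (k+1)))
        ≤ (1/2:ℝ)^k - (1/2:ℝ)^(k+j) := by
      intro j
      induction j with
      | zero => simp
      | succ j ih =>
        have h1 : dist ((⇑T)^[M (k+1)] (c (k+1+j+1))) ((⇑T)^[M (k+1)] (c (k+1+j)))
            ≤ (1/2:ℝ)^(k+1+j) := by
          rw [dist_sub_zero hinv, ← iter_sub]
          exact hdel (k+1+j) (M (k+1)) (hMmono.monotone (show k+1 ≤ k+1+j by omega))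
        have e1 : (1/2:ℝ)^(k+1+j) = (1/2:ℝ)^(k+j) * (1/2) := by
          rw [show k+1+j = (k+j)+1 by omega, pow_succ]
        have e2 : (1/2:ℝ)^(k+(j+1)) = (1/2:ℝ)^(k+j) * (1/2) := by
          rw [show k+(j+1) = (k+j)+1 by omega, pow_succ]
        have htri := dist_triangle ((⇑T)^[M (k+1)] (c (k+1+j+1)))
          ((⇑T)^[M (k+1)] (c (k+1+j))) ((⇑T)^[M (k+1)] (c (k+1)))
        have : k+1+(j+1) = k+1+j+1 := by omega
        rw [this]
        linarith
    have hcz : Tendsto (fun j => c (k+1+j)) atTop (𝓝 z) := by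
      have hco : (fun j => c (k+1+j)) = (fun j : ℕ => c (j + (k+1))) :=
        funext fun j => by rw [Nat.add_comm]
      rw [hco]
      exact hz.comp (tendsto_add_atTop_nat (k+1))
    have hlim : Tendsto (fun j => dist ((⇑T)^[M (k+1)] (c (k+1+j))) ((⇑T)^[M (k+1)] (c (k+1))))
        atTop (𝓝 (dist ((⇑T)^[M (k+1)] z) ((⇑T)^[M (k+1)] (c (k+1))))) := by
      apply Tendsto.dist ?_ tendsto_const_nhds
      exact ((T.continuous.iterate (M (k+1))).tendsto z).comp hcz
    refine le_of_tendsto hlim (Filter.Eventually.of_forall fun j => (hstepdist j).trans ?_)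
    have : (0:ℝ) ≤ (1/2:ℝ)^(k+j) := by positivity
    linarith
  have hzNS : z ∈ NSset ⇑T := by
    refine ⟨fun j => M (2*j+1+1), fun a b hab => hMmono (show 2*a+1+1 < 2*b+1+1 by omega), ?_⟩
    apply tendsto_iff_dist_tendsto_zero.2
    have hb : ∀ j, dist ((⇑T)^[M (2*j+1+1)] z) 0 ≤ (1/2:ℝ)^(2*j) := by
      intro j
      have h1 := htail (2*j+1)
      have h2 := hche (2*j+1) ⟨j+1, by omega⟩
      have htri := dist_triangle ((⇑T)^[M (2*j+1+1)] z) ((⇑T)^[M (2*j+1+1)] (c (2*j+1+1))) 0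
      have e : (1/2:ℝ)^(2*j+1) + (1/2:ℝ)^(2*j+1) = (1/2:ℝ)^(2*j) := by
        rw [pow_succ]; ring
      linarith
    apply squeeze_zero (fun j => dist_nonneg) hb
    have : (fun j : ℕ => (1/2:ℝ)^(2*j)) = fun j : ℕ => ((1/2:ℝ)^2)^j :=
      funext fun j => by rw [← pow_mul]
    rw [this]
    exact tendsto_pow_atTop_nhds_zero_of_lt_one (by norm_num) (by norm_num)
  have hzD := hcon z hzNS
  obtain ⟨N₁, hN₁⟩ := Metric.tendsto_atTop.1 hzD (ε/4) (by linarith)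
  obtain ⟨n₀, hn₀⟩ := exists_pow_lt_of_lt_one (show (0:ℝ) < ε/4 by linarith)
    (by norm_num : (1/2:ℝ) < 1)
  set k := max n₀ N₁ with hk
  have hnotev : ¬ Even (2*k+1) := by
    rintro ⟨j, hj⟩
    omega
  have h1 := hcho (2*k) hnotev
  have h2 := htail (2*k)
  have h3 := dist_triangle ((⇑T)^[M (2*k+1)] (c (2*k+1))) ((⇑T)^[M (2*k+1)] z) 0
  rw [dist_comm ((⇑T)^[M (2*k+1)] (c (2*k+1))) ((⇑T)^[M (2*k+1)] z)] at h3
  have hge : N₁ ≤ M (2*k+1) := by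
    have hk1 : N₁ ≤ 2*k+1 := by
      have := le_max_right n₀ N₁
      omega
    exact le_trans hk1 hMmono.le_apply
  have hcontr := hN₁ (M (2*k+1)) hge
  have hpow : (1/2:ℝ)^(2*k) ≤ (1/2:ℝ)^n₀ := by
    apply pow_le_pow_of_le_one (by norm_num) (by norm_num)
    have := le_max_left n₀ N₁
    omega
  linarith

end F



section G
variable {𝕂 X : Type} [RCLike 𝕂] [AddCommGroup X] [Module 𝕂 X]
  [MetricSpace X] [CompleteSpace X] [ContinuousAdd X] [ContinuousSMul 𝕂 X]
  [Module ℝ X] [IsScalarTower ℝ 𝕂 X]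
variable (T : X →L[𝕂] X)
variable (hinv : ∀ x y z : X, dist (x + z) (y + z) = dist x y)

theorem real_smul_eq (r : ℝ) (x : X) : r • x = (r • (1:𝕂)) • x :=
  (smul_one_smul 𝕂 r x).symm

theorem smul_mem_NS {z : X} (hz : z ∈ NSset ⇑T) (r : ℝ) : r • z ∈ NSset ⇑T := by
  obtain ⟨φ, hφ, hten⟩ := hz
  refine ⟨φ, hφ, ?_⟩
  have heq : (fun j => (⇑T)^[φ j] (r • z)) = fun j => (r • (1:𝕂)) • (⇑T)^[φ j] z := by
    funext j
    rw [real_smul_eq (𝕂 := 𝕂), iter_smul]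
  rw [heq]
  have := ((continuous_const_smul (r • (1:𝕂))).tendsto (0:X)).comp hten
  simpa [Function.comp_def] using this

theorem smul_not_tendsto {z : X} (hz : ¬ Tendsto (fun n : ℕ => (⇑T)^[n] z) atTop (𝓝 0))
    {r : ℝ} (hr : r ≠ 0) :
    ¬ Tendsto (fun n : ℕ => (⇑T)^[n] (r • z)) atTop (𝓝 0) := by
  intro h
  apply hz
  have heq : (fun n : ℕ => (⇑T)^[n] z) = fun n => (r⁻¹ • (1:𝕂)) • (⇑T)^[n] (r • z) := by
    funext n
    rw [← real_smul_eq (𝕂 := 𝕂)]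
    have h2 : (⇑T)^[n] (r • z) = r • (⇑T)^[n] z := by
      rw [real_smul_eq (𝕂 := 𝕂), iter_smul, ← real_smul_eq (𝕂 := 𝕂)]
    rw [h2, inv_smul_smul₀ hr]
  rw [heq]
  have := ((continuous_const_smul ((r⁻¹ • (1:𝕂)))).tendsto (0:X)).comp h
  simpa [Function.comp_def] using this

include hinv in
theorem liYorkeChaotic_of_semi {z : X} (h1 : z ∈ NSset ⇑T)
    (h2 : ¬ Tendsto (fun n : ℕ => (⇑T)^[n] z) atTop (𝓝 0)) : LiYorkeChaotic ⇑T := by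
  have hz0 : z ≠ 0 := by
    rintro rfl
    exact h2 (Dset_zero T)
  have hinj : Function.Injective (fun r : ℝ => r • z) := by
    intro r r' h
    by_contra hne
    apply hz0
    have h' : r • z = r' • z := h
    have hsub : (r - r') • z = 0 := by rw [sub_smul, h', sub_self]
    have hzz : z = (r - r')⁻¹ • ((r - r') • z) := (inv_smul_smul₀ (sub_ne_zero.2 hne) z).symm
    rw [hsub, smul_zero] at hzz
    exact hzz
  refine ⟨Set.range (fun r : ℝ => r • z), ?_, ?_⟩
  · intro hS
    have hpre := hS.preimage hinj
    rw [Set.preimage_range] at hpre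
    exact Cardinal.not_countable_real hpre
  · rintro _ ⟨r, rfl⟩ _ ⟨r', rfl⟩ hne
    have hrr' : r ≠ r' := fun h => hne (by rw [h])
    have hsub : r • z - r' • z = (r - r') • z := (sub_smul r r' z).symm
    apply liYorkePair_of T hinv
    · rw [hsub]
      exact smul_mem_NS T h1 (r - r')
    · rw [hsub]
      exact smul_not_tendsto T h2 (sub_ne_zero.2 hrr')

theorem liYorkePair_symm {M : Type*} [PseudoMetricSpace M] {g : M → M} {a b : M}
    (h : LiYorkePair g a b) : LiYorkePair g b a := by
  obtain ⟨h1, h2⟩ := h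
  have he : (fun n : ℕ => edist (g^[n] b) (g^[n] a)) = fun n : ℕ => edist (g^[n] a) (g^[n] b) :=
    funext fun n => edist_comm _ _
  exact ⟨by rw [he]; exact h1, by rw [he]; exact h2⟩

include hinv in
theorem densely_liYorke (hsep : TopologicalSpace.SeparableSpace X)
    (hd : Dense (NSset ⇑T)) (hNC : ¬ IsClosed (NSset ⇑T)) : DenselyLiYorkeChaotic ⇑T := by
  haveI := tag (X := X) 𝕂
  haveI : Nonempty X := ⟨0⟩
  set R : Set X := NSset ⇑T ∩ {u : X | ¬ Tendsto (fun n : ℕ => (⇑T)^[n] u) atTop (𝓝 0)}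
    with hRdef
  have hR : R ∈ residual X := by
    have hDm : IsMeagre (Dset T) := by
      by_contra hnm
      have hBdd : ¬ IsMeagre (BddSet T) := fun h => hnm (h.mono fun x hx => bdd_of_tendsto T hx)
      have hE := equi_of_not_meagre T hBdd
      apply hNC
      rw [NS_eq_dset_of_equi T hE]
      exact dense_closed_of_equi T hE
    exact Filter.inter_mem (NS_residual T hd) hDm
  have h0R : (0:X) ∉ R := fun h => h.2 (Dset_zero T)
  have htrans : ∀ c : X, {x : X | x - c ∈ R} ∈ residual X := by
    intro c
    obtain ⟨t, hts, hGδ, hdense⟩ := mem_residual.1 hR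
    refine mem_residual.2 ⟨{x : X | x - c ∈ t}, fun x hx => hts hx, ?_, ?_⟩
    · obtain ⟨f, hfo, rfl⟩ := isGδ_iff_eq_iInter_nat.1 hGδ
      have heq : {x : X | x - c ∈ ⋂ n, f n} = ⋂ n, (fun x : X => x - c) ⁻¹' (f n) := by
        ext u
        simp
      rw [heq]
      exact IsGδ.iInter_of_isOpen fun n =>
        (hfo n).preimage (by continuity)
    · rw [dense_iff_inter_open]
      intro U hU hUne
      have himg : IsOpen ((fun x : X => x + -c) '' U) := (Homeomorph.addRight (-c)).isOpenMap U hU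
      have hne : ((fun x : X => x + -c) '' U).Nonempty := hUne.image _
      obtain ⟨w, hwV, hwt⟩ := dense_iff_inter_open.1 hdense _ himg hne
      obtain ⟨u, hu, rfl⟩ := hwV
      exact ⟨u, hu, by simpa [sub_eq_add_neg] using hwt⟩
  have hpick : ∀ (C : Set X), C.Countable → ∀ (U : Set X), IsOpen U → U.Nonempty →
      ∃ s, s ∈ U ∧ ∀ c ∈ C, s - c ∈ R := by
    intro C hC U hU hUne
    have hI : (⋂ c ∈ C, {x : X | x - c ∈ R}) ∈ residual X :=
      (countable_bInter_mem hC).2 fun c _ => htrans c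
    obtain ⟨s, hs1, hs2⟩ := (dense_of_mem_residual hI).exists_mem_open hU hUne
    exact ⟨s, hs2, fun c hc => Set.mem_iInter₂.1 hs1 c hc⟩
  obtain ⟨dseq, hdseq⟩ := TopologicalSpace.exists_dense_seq X
  set Bs : ℕ → Set X := fun m => Metric.ball (dseq m.unpair.1) (1/(m.unpair.2+1)) with hBs
  have hBso : ∀ m, IsOpen (Bs m) := fun m => Metric.isOpen_ball
  have hBsne : ∀ m, (Bs m).Nonempty := fun m => ⟨dseq m.unpair.1,
    Metric.mem_ball_self (by positivity)⟩
  -- the index type of cardinality ℵ₁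
  have hIio : ∀ i : (Cardinal.aleph.{0} 1).ord.ToType, (Set.Iio i).Countable := fun i =>
    (Cardinal.countable_iff_lt_aleph_one _).2 (Cardinal.mk_Iio_ord_toType i)
  haveI hinf : Infinite (Cardinal.aleph.{0} 1).ord.ToType := by
    rw [Cardinal.infinite_iff, Cardinal.mk_ord_toType]
    exact Cardinal.aleph0_le_aleph 1
  classical
  set e := Infinite.natEmbedding (Cardinal.aleph.{0} 1).ord.ToType with he
  set b : (Cardinal.aleph.{0} 1).ord.ToType → ℕ :=
    fun i => if h : ∃ n, e n = i then h.choose else 0 with hb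
  have hbsurj : ∀ m : ℕ, ∃ i, b i = m := by
    intro m
    refine ⟨e m, ?_⟩
    have hex : ∃ n, e n = e m := ⟨m, rfl⟩
    show (if h : ∃ n, e n = e m then h.choose else 0) = m
    rw [dif_pos hex]
    exact e.injective hex.choose_spec
  have hwf : WellFounded ((· < ·) : (Cardinal.aleph.{0} 1).ord.ToType →
      (Cardinal.aleph.{0} 1).ord.ToType → Prop) := IsWellFounded.wf
  have hcnt : ∀ (i : (Cardinal.aleph.{0} 1).ord.ToType) (g : {j // j < i} → X),
      (Set.range g).Countable := by
    intro i g
    haveI : Countable {j // j < i} := (hIio i).to_subtype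
    exact Set.countable_range g
  set body : ∀ i : (Cardinal.aleph.{0} 1).ord.ToType, (∀ j, j < i → X) → X :=
    fun i rec => (hpick (Set.range fun j : {j // j < i} => rec j.1 j.2)
      (hcnt i _) (Bs (b i)) (hBso _) (hBsne _)).choose with hbody
  set F : (Cardinal.aleph.{0} 1).ord.ToType → X := fun i => hwf.fix body i with hF
  have hFspec : ∀ i, F i ∈ Bs (b i) ∧ ∀ j, j < i → F i - F j ∈ R := by
    intro i
    have heq : F i = body i (fun j _ => F j) := hwf.fix_eq body i
    have hspec := (hpick (Set.range fun j : {j // j < i} => F j.1)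
      (hcnt i _) (Bs (b i)) (hBso _) (hBsne _)).choose_spec
    rw [heq, hbody]
    exact ⟨hspec.1, fun j hj => hspec.2 (F j) ⟨⟨j, hj⟩, rfl⟩⟩
  have hFinj : Function.Injective F := by
    intro i j hij
    by_contra hne
    rcases lt_or_gt_of_ne hne with h | h
    · have hmem := (hFspec j).2 i h
      rw [hij, sub_self] at hmem
      exact h0R hmem
    · have hmem := (hFspec i).2 j h
      rw [hij, sub_self] at hmem
      exact h0R hmem
  refine ⟨Set.range F, ?_, ?_, ?_⟩
  · rw [Metric.dense_iff]
    intro x r hr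
    obtain ⟨m1, hm1⟩ := hdseq.exists_dist_lt x (show (0:ℝ) < r/2 by linarith)
    obtain ⟨m2, hm2⟩ := exists_nat_one_div_lt (show (0:ℝ) < r/2 by linarith)
    obtain ⟨i, hi⟩ := hbsurj (Nat.pair m1 m2)
    refine ⟨F i, ?_, ⟨i, rfl⟩⟩
    have hmem := (hFspec i).1
    rw [hi, hBs] at hmem
    simp only [Nat.unpair_pair] at hmem
    rw [Metric.mem_ball] at hmem ⊢
    have htri := dist_triangle (F i) (dseq m1) x
    have hdm1 : dist (dseq m1) x < r/2 := by rw [dist_comm]; exact hm1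
    have hlt : dist (F i) (dseq m1) < 1/((m2:ℝ)+1) := hmem
    linarith
  · intro hS
    have hpre := hS.preimage hFinj
    rw [Set.preimage_range, Set.countable_univ_iff] at hpre
    have hle : Cardinal.mk (Cardinal.aleph.{0} 1).ord.ToType ≤ Cardinal.aleph0 :=
      Cardinal.mk_le_aleph0
    rw [Cardinal.mk_ord_toType] at hle
    exact absurd hle (not_le.2 Cardinal.aleph0_lt_aleph_one)
  · rintro _ ⟨i, rfl⟩ _ ⟨j, rfl⟩ hne
    have hij : i ≠ j := fun h => hne (by rw [h])
    rcases lt_or_gt_of_ne hij with h | h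
    · have hmem := (hFspec j).2 i h
      exact liYorkePair_symm (liYorkePair_of T hinv hmem.1 hmem.2)
    · have hmem := (hFspec i).2 j h
      exact liYorkePair_of T hinv hmem.1 hmem.2

end G


theorem frechet_trichotomy_and_liYorke
    {𝕂 X : Type} [RCLike 𝕂] [AddCommGroup X] [Module 𝕂 X]
    [MetricSpace X] [CompleteSpace X] [ContinuousAdd X] [ContinuousSMul 𝕂 X]
    [Module ℝ X] [IsScalarTower ℝ 𝕂 X] [LocallyConvexSpace ℝ X]
    (hinv : ∀ x y z : X, dist (x + z) (y + z) = dist x y)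
    (T : X →L[𝕂] X) :
    ((({x | IrregularVector 𝕂 (⇑T) x} ∈ residual X) ∧
        ¬ (∀ x : X, Tendsto (fun n : ℕ => (⇑T)^[n] x) atTop (nhds 0)) ∧
        Dense (NSset (⇑T))) ∨
      (¬ ({x | IrregularVector 𝕂 (⇑T) x} ∈ residual X) ∧
        (∀ x : X, Tendsto (fun n : ℕ => (⇑T)^[n] x) atTop (nhds 0)) ∧
        Dense (NSset (⇑T))) ∨
      (¬ ({x | IrregularVector 𝕂 (⇑T) x} ∈ residual X) ∧
        ¬ (∀ x : X, Tendsto (fun n : ℕ => (⇑T)^[n] x) atTop (nhds 0)) ∧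
        ¬ Dense (NSset (⇑T)))) ∧
    (¬ IsClosed (NSset (⇑T)) → LiYorkeChaotic (⇑T)) ∧
    (TopologicalSpace.SeparableSpace X → Dense (NSset (⇑T)) → ¬ IsClosed (NSset (⇑T)) →
      DenselyLiYorkeChaotic (⇑T)) := by
  haveI : Nonempty X := ⟨0⟩
  refine ⟨?_, ?_, ?_⟩
  · by_cases hB : ∀ x : X, Tendsto (fun n : ℕ => (⇑T)^[n] x) atTop (nhds 0)
    · refine Or.inr (Or.inl ⟨?_, hB, ?_⟩)
      · intro hres
        obtain ⟨x, hx⟩ := (dense_of_mem_residual hres).nonempty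
        exact hx.1 (bdd_of_tendsto T (hB x))
      · have hall : ∀ x : X, x ∈ NSset ⇑T := fun x => ⟨id, strictMono_id, hB x⟩
        have : NSset ⇑T = Set.univ := Set.eq_univ_of_forall hall
        rw [this]
        exact dense_univ
    · by_cases hC : Dense (NSset ⇑T)
      · exact Or.inl ⟨irregular_residual T hC hB, hB, hC⟩
      · refine Or.inr (Or.inr ⟨?_, hB, hC⟩)
        intro hres
        apply hC
        exact Dense.mono (fun x hx => hx.2) (dense_of_mem_residual hres)
  · intro hNC
    obtain ⟨z, hz1, hz2⟩ := exists_semi_irregular T hinv hNC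
    exact liYorkeChaotic_of_semi T hinv hz1 hz2
  · intro hsep hd hNC
    exact densely_liYorke T hinv hsep hd hNC
end
end

section
/- Let X be a Fréchet sequence space (over ℕ) in which the sequence (e_n)_{n∈ℕ} of canonical vectors is a basis, let w := (w_n)_{n∈ℕ} be a sequence of nonzero scalars, and suppose the unilateral weighted backward shift B_w(x₁,x₂,x₃,…) := (w₁x₂, w₂x₃, w₃x₄, …) is a well-defined (continuous linear) operator on X. Then either (a) B_w is densely Li-Yorke chaotic, or (b) lim_{n→∞} B_wⁿ x = 0 for every x ∈ X. -/
open Filter Topology MeasureTheory ENNReal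

noncomputable section

private lemma depRec {α : Type*} (q : α → ℕ) (C : ℕ → ℕ → α → Prop)
    (h : ∀ i Q, ∃ a, C i Q a) :
    ∃ g : ℕ → α, C 0 0 (g 0) ∧ ∀ i, C (i + 1) (q (g i)) (g (i + 1)) := by
  choose f hf using h
  exact ⟨fun n => Nat.rec (f 0 0) (fun i prev => f (i + 1) (q prev)) n, hf 0 0, fun i => hf _ _⟩

private lemma geom_tail_le (i N : ℕ) :
    ∑ l ∈ Finset.Ico (i + 1) N, ((1:ℝ) / 2) ^ l ≤ (1 / 2) ^ i := by
  rw [Finset.sum_Ico_eq_sum_range]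
  calc ∑ k ∈ Finset.range (N - (i + 1)), ((1:ℝ) / 2) ^ (i + 1 + k)
      = (1 / 2) ^ (i + 1) * ∑ k ∈ Finset.range (N - (i + 1)), ((1:ℝ) / 2) ^ k := by
        rw [Finset.mul_sum]; exact Finset.sum_congr rfl fun k _ => pow_add _ _ _
    _ ≤ (1 / 2) ^ (i + 1) * 2 := by
        exact mul_le_mul_of_nonneg_left (sum_geometric_two_le _) (by positivity)
    _ = (1 / 2) ^ i := by ring

theorem unilateral_shift_frechet_dichotomy
    {𝕂 X : Type} [RCLike 𝕂] [AddCommGroup X] [Module 𝕂 X]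
    [MetricSpace X] [CompleteSpace X] [ContinuousAdd X] [ContinuousSMul 𝕂 X]
    [Module ℝ X] [IsScalarTower ℝ 𝕂 X] [LocallyConvexSpace ℝ X]
    (hinv : ∀ x y z : X, dist (x + z) (y + z) = dist x y)
    -- `X` is a Fréchet sequence space: it embeds continuously and linearly in `𝕂^ℕ`
    (ι : X →L[𝕂] (ℕ → 𝕂)) (hι : Function.Injective ι)
    -- the canonical vectors belong to `X` and form a basis
    (E : ℕ → X) (hE : ∀ n, ι (E n) = Pi.single n 1)
    (hbasis : ∀ x : X,
      Tendsto (fun N : ℕ => ∑ m ∈ Finset.range N, ι x m • E m) atTop (nhds x))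
    (w : ℕ → 𝕂) (hw0 : ∀ n, w n ≠ 0)
    (B : X →L[𝕂] X) (hB : ∀ (x : X) (n : ℕ), ι (B x) n = w n * ι x (n + 1)) :
    DenselyLiYorkeChaotic (⇑B) ∨
      ∀ x : X, Tendsto (fun n : ℕ => (⇑B)^[n] x) atTop (nhds 0) := by
  classical
  by_cases hall : ∀ x : X, Tendsto (fun n : ℕ => (⇑B)^[n] x) atTop (nhds 0)
  · exact Or.inr hall
  left
  push_neg at hall
  obtain ⟨x₀, hx₀⟩ := hall
  -- basic translation-invariance consequences
  have hd0 : ∀ a b : X, dist a b = dist (a - b) 0 := by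
    intro a b
    have := hinv (a - b) 0 b
    simpa using this
  have hneg : ∀ a : X, dist (-a) 0 = dist a 0 := by
    intro a
    have := hinv (-a) 0 a
    simp only [neg_add_cancel, zero_add] at this
    rw [← this, dist_comm]
  have hadd : ∀ a b : X, dist (a + b) 0 ≤ dist a 0 + dist b 0 := by
    intro a b
    have h1 : dist (a + b) b = dist a 0 := by
      have := hinv a 0 b; simpa using this
    calc dist (a + b) 0 ≤ dist (a + b) b + dist b 0 := dist_triangle _ _ _
      _ = dist a 0 + dist b 0 := by rw [h1]
  have hadd2 : ∀ a a' b b' : X, dist (a + b) (a' + b') ≤ dist a a' + dist b b' := by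
    intro a a' b b'
    have h1 : dist (a + b) (a' + b) = dist a a' := hinv a a' b
    have h2 : dist (a' + b) (a' + b') = dist b b' := by
      rw [add_comm a' b, add_comm a' b']; exact hinv b b' a'
    calc dist (a + b) (a' + b') ≤ dist (a + b) (a' + b) + dist (a' + b) (a' + b') :=
        dist_triangle _ _ _
      _ = dist a a' + dist b b' := by rw [h1, h2]
  have hsub : ∀ a b : X, dist (a - b) 0 ≤ dist a 0 + dist b 0 := by
    intro a b
    calc dist (a - b) 0 = dist (a + (-b)) 0 := by rw [sub_eq_add_neg]
      _ ≤ dist a 0 + dist (-b) 0 := hadd _ _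
      _ = dist a 0 + dist b 0 := by rw [hneg]
  have hsum : ∀ (s : Finset ℕ) (f : ℕ → X), dist (∑ l ∈ s, f l) 0 ≤ ∑ l ∈ s, dist (f l) 0 := by
    intro s f
    induction s using Finset.induction with
    | empty => simp
    | insert _ _ hnotmem ih =>
      rw [Finset.sum_insert hnotmem, Finset.sum_insert hnotmem]
      exact le_trans (hadd _ _) (add_le_add_right ih _)
  -- topological group structure
  haveI : ContinuousNeg X := by
    constructor
    have : (fun x : X => -x) = fun x : X => (-1 : 𝕂) • x := funext fun x => (neg_one_smul 𝕂 x).symm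
    rw [this]
    exact continuous_const_smul _
  haveI : IsTopologicalAddGroup X := { }
  -- iterates are powers
  have hpow : ∀ (n : ℕ) (v : X), (⇑B)^[n] v = (B ^ n) v := by
    intro n
    induction n with
    | zero => intro v; simp
    | succ n ih =>
      intro v
      rw [Function.iterate_succ_apply', ih, pow_succ', ContinuousLinearMap.mul_apply]
  -- basic action on canonical vectors
  have hBE0 : B (E 0) = 0 := by
    apply hι
    rw [map_zero]
    funext n
    rw [hB, hE]
    simp [Pi.single_eq_of_ne (Nat.succ_ne_zero n)]
  have hBES : ∀ k, B (E (k + 1)) = w k • E k := by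
    intro k
    apply hι
    rw [ContinuousLinearMap.map_smul]
    funext n
    rw [hB, hE, hE k]
    by_cases h : n = k
    · subst h; simp
    · have h1 : n + 1 ≠ k + 1 := by omega
      simp [Pi.single_eq_of_ne h1, Pi.single_eq_of_ne h, h]
  have hEkill : ∀ (k m : ℕ), k < m → (B ^ m) (E k) = 0 := by
    intro k
    induction k with
    | zero =>
      intro m hm
      obtain ⟨m', rfl⟩ : ∃ m', m = m' + 1 := ⟨m - 1, by omega⟩
      rw [pow_succ, ContinuousLinearMap.mul_apply, hBE0, map_zero]
    | succ k ih =>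
      intro m hm
      obtain ⟨m', rfl⟩ : ∃ m', m = m' + 1 := ⟨m - 1, by omega⟩
      rw [pow_succ, ContinuousLinearMap.mul_apply, hBES, ContinuousLinearMap.map_smul, ih m' (by omega), smul_zero]
  -- frequently far from zero
  obtain ⟨ε, hε, hfr⟩ : ∃ ε > (0:ℝ), ∃ᶠ n in atTop, ε ≤ dist ((B ^ n) x₀) 0 := by
    rw [Metric.tendsto_atTop] at hx₀
    push_neg at hx₀
    obtain ⟨ε, hε, h⟩ := hx₀
    refine ⟨ε, hε, ?_⟩
    rw [Filter.frequently_atTop]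
    intro N
    obtain ⟨n, hn, h2⟩ := h N
    exact ⟨n, hn, by rwa [hpow] at h2⟩
  -- partial sums and tails
  set P : ℕ → X → X := fun N v => ∑ m ∈ Finset.range N, ι v m • E m with hPdef
  have htail : ∀ v : X, Tendsto (fun N => v - P N v) atTop (nhds 0) := by
    intro v
    have h2 := Filter.Tendsto.sub (tendsto_const_nhds (x := v) (f := atTop)) (hbasis v)
    simpa using h2
  set blk : ℕ → ℕ → X := fun a b => ∑ m ∈ Finset.Ico a b, ι x₀ m • E m with hblkdef
  have hblk_eq : ∀ a b : ℕ, a ≤ b → blk a b = (x₀ - P a x₀) - (x₀ - P b x₀) := by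
    intro a b hab
    rw [hblkdef]
    simp only []
    rw [Finset.sum_Ico_eq_sub _ hab]
    rw [hPdef]
    simp only []
    abel
  have hblk_kill : ∀ a b m : ℕ, b ≤ m → (B ^ m) (blk a b) = 0 := by
    intro a b m hbm
    rw [hblkdef]
    simp only []
    rw [map_sum]
    apply Finset.sum_eq_zero
    intro k hk
    rw [ContinuousLinearMap.map_smul, hEkill k m (by
      rcases Finset.mem_Ico.mp hk with ⟨_, h2⟩; omega), smul_zero]
  -- uniform smallness of finitely many iterates
  have hdelta : ∀ (K : ℕ) (η : ℝ), 0 < η → ∃ δ > (0:ℝ), ∀ u : X, dist u 0 < δ →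
      (∀ m ≤ K, dist ((B ^ m) u) 0 < η) ∧ dist u 0 < η := by
    intro K η hη
    induction K with
    | zero =>
      refine ⟨η, hη, fun u hu => ⟨fun m hm => ?_, hu⟩⟩
      interval_cases m
      simpa using hu
    | succ K ih =>
      obtain ⟨δ, hδ, hδP⟩ := ih
      have hcont : ContinuousAt (fun u : X => (B ^ (K + 1)) u) 0 := (B ^ (K + 1)).continuous.continuousAt
      rw [Metric.continuousAt_iff] at hcont
      obtain ⟨δ', hδ', hδ'P⟩ := hcont η hη
      refine ⟨min δ δ', lt_min hδ hδ', fun u hu => ?_⟩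
      have h1 := hδP u (lt_of_lt_of_le hu (min_le_left _ _))
      refine ⟨fun m hm => ?_, h1.2⟩
      rcases Nat.lt_or_ge m (K + 1) with h | h
      · exact h1.1 m (by omega)
      · have hm1 : m = K + 1 := by omega
        subst hm1
        have := hδ'P (show dist u 0 < δ' from lt_of_lt_of_le hu (min_le_right _ _))
        simpa using this
  -- the recursive construction step
  have hstep : ∀ (i Q : ℕ), ∃ p : ℕ × ℕ,
      Q + 1 < p.1 ∧ p.1 < p.2 ∧
      dist (blk p.1 p.2) 0 ≤ (1/2) ^ i ∧
      (∀ m ≤ Q + 1, dist ((B ^ m) (blk p.1 p.2)) 0 ≤ (1/2) ^ i) ∧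
      ε / 2 ≤ dist ((B ^ p.1) (blk p.1 p.2)) 0 := by
    intro i Q
    obtain ⟨δ, hδ, hδP⟩ := hdelta (Q + 1) ((1/2) ^ i / 2) (by positivity)
    obtain ⟨N₁, hN₁⟩ := (Metric.tendsto_atTop.mp (htail x₀)) δ hδ
    obtain ⟨ν, hν_ge, hνε⟩ := Filter.frequently_atTop.mp hfr (max N₁ (Q + 2))
    -- choose M
    have hBνcont : Tendsto (fun M => (B ^ ν) (x₀ - P M x₀)) atTop (nhds 0) := by
      have := ((B ^ ν).continuous.tendsto 0).comp (htail x₀)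
      rw [map_zero] at this
      exact this
    obtain ⟨N₂, hN₂⟩ := (Metric.tendsto_atTop.mp hBνcont) (ε / 2) (by positivity)
    set M := max (max N₁ N₂) (ν + 1) with hM
    have hνM : ν < M := lt_of_lt_of_le (Nat.lt_succ_self ν) (le_max_right _ _)
    have hTν : dist (x₀ - P ν x₀) 0 < δ := hN₁ ν (le_trans (le_max_left _ _) hν_ge)
    have hTM : dist (x₀ - P M x₀) 0 < δ :=
      hN₁ M (le_trans (le_max_left _ _) (le_max_left _ _))
    have hblkE : blk ν M = (x₀ - P ν x₀) - (x₀ - P M x₀) := hblk_eq ν M (le_of_lt hνM)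
    refine ⟨(ν, M), by omega, hνM, ?_, ?_, ?_⟩
    · rw [hblkE]
      calc dist ((x₀ - P ν x₀) - (x₀ - P M x₀)) 0
          ≤ dist (x₀ - P ν x₀) 0 + dist (x₀ - P M x₀) 0 := hsub _ _
        _ ≤ (1/2) ^ i / 2 + (1/2) ^ i / 2 := add_le_add (le_of_lt (hδP _ hTν).2) (le_of_lt (hδP _ hTM).2)
        _ = (1/2) ^ i := by ring
    · intro m hm
      rw [hblkE, map_sub]
      calc dist ((B ^ m) (x₀ - P ν x₀) - (B ^ m) (x₀ - P M x₀)) 0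
          ≤ dist ((B ^ m) (x₀ - P ν x₀)) 0 + dist ((B ^ m) (x₀ - P M x₀)) 0 := hsub _ _
        _ ≤ (1/2) ^ i / 2 + (1/2) ^ i / 2 :=
            add_le_add (le_of_lt ((hδP _ hTν).1 m hm)) (le_of_lt ((hδP _ hTM).1 m hm))
        _ = (1/2) ^ i := by ring
    · -- lower bound at time ν
      have hPkill : (B ^ ν) (P ν x₀) = 0 := by
        rw [hPdef]
        simp only []
        rw [map_sum]
        apply Finset.sum_eq_zero
        intro k hk
        rw [ContinuousLinearMap.map_smul, hEkill k ν (Finset.mem_range.mp hk), smul_zero]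
      have hBz : (B ^ ν) (blk ν M) = (B ^ ν) x₀ - (B ^ ν) (x₀ - P M x₀) := by
        rw [hblkE, map_sub, map_sub, hPkill]
        abel
      have hsmall : dist ((B ^ ν) (x₀ - P M x₀)) 0 < ε / 2 :=
        hN₂ M (le_trans (le_max_right _ _) (le_max_left _ _))
      have htri : dist ((B ^ ν) x₀) 0 ≤ dist ((B ^ ν) (blk ν M)) 0 + dist ((B ^ ν) (x₀ - P M x₀)) 0 := by
        have hx : (B ^ ν) x₀ = (B ^ ν) (blk ν M) + (B ^ ν) (x₀ - P M x₀) := by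
          rw [hBz]; abel
        rw [hx]
        exact hadd _ _
      linarith [hνε]
  -- run the recursion
  obtain ⟨g, hg0, hgs⟩ := depRec Prod.snd (fun i Q p =>
      Q + 1 < p.1 ∧ p.1 < p.2 ∧
      dist (blk p.1 p.2) 0 ≤ (1/2) ^ i ∧
      (∀ m ≤ Q + 1, dist ((B ^ m) (blk p.1 p.2)) 0 ≤ (1/2) ^ i) ∧
      ε / 2 ≤ dist ((B ^ p.1) (blk p.1 p.2)) 0) hstep
  set nu : ℕ → ℕ := fun i => (g i).1 with hnudef
  set Mq : ℕ → ℕ := fun i => (g i).2 with hMqdef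
  set z : ℕ → X := fun i => blk (nu i) (Mq i) with hzdef
  have hnuM : ∀ i, nu i < Mq i := by
    intro i
    cases i with
    | zero => exact hg0.2.1
    | succ i => exact (hgs i).2.1
  have hMnu : ∀ i, Mq i + 1 < nu (i + 1) := fun i => (hgs i).1
  have hz_small : ∀ i, dist (z i) 0 ≤ (1/2) ^ i := by
    intro i
    cases i with
    | zero => exact hg0.2.2.1
    | succ i => exact (hgs i).2.2.1
  have hz_m : ∀ i m, m ≤ Mq i + 1 → dist ((B ^ m) (z (i + 1))) 0 ≤ (1/2) ^ (i + 1) :=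
    fun i m hm => (hgs i).2.2.2.1 m hm
  have hz_big : ∀ i, ε / 2 ≤ dist ((B ^ (nu i)) (z i)) 0 := by
    intro i
    cases i with
    | zero => exact hg0.2.2.2.2
    | succ i => exact (hgs i).2.2.2.2
  have hz_kill : ∀ l m, Mq l ≤ m → (B ^ m) (z l) = 0 := fun l m hm => hblk_kill _ _ _ hm
  have hMmono : StrictMono Mq := strictMono_nat_of_lt_succ (fun i => by
    have h1 := hMnu i
    have h2 := hnuM (i + 1)
    omega)
  have hnumono : StrictMono nu := strictMono_nat_of_lt_succ (fun i => by
    have := hMnu i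
    have := hnuM i
    have := hnuM (i + 1)
    have := hnuM i
    omega)
  have hMtop : Tendsto Mq atTop atTop := hMmono.tendsto_atTop
  have hnutop : Tendsto nu atTop atTop := hnumono.tendsto_atTop
  -- the vector y
  set Sp : ℕ → X := fun N => ∑ l ∈ Finset.range N, z l with hSpdef
  have hcauchy : CauchySeq Sp := by
    apply cauchySeq_of_le_geometric (1/2 : ℝ) 1 (by norm_num)
    intro n
    have h1 : dist (Sp n) (Sp (n + 1)) = dist (z n) 0 := by
      rw [dist_comm, hd0]
      congr 1
      rw [hSpdef]
      simp only []
      rw [Finset.sum_range_succ]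
      abel
    rw [h1, one_mul]
    exact hz_small n
  obtain ⟨y, hy⟩ := cauchySeq_tendsto_of_complete hcauchy
  -- the core estimate
  have hcore : ∀ (m i : ℕ), (∀ l, l ≤ i → l ≠ i → (B ^ m) (z l) = 0) →
      (∀ l, i < l → dist ((B ^ m) (z l)) 0 ≤ (1/2) ^ l) →
      dist ((B ^ m) y) ((B ^ m) (z i)) ≤ (1/2) ^ i := by
    intro m i h0 hs
    have hlim : Tendsto (fun N => (B ^ m) (Sp N)) atTop (nhds ((B ^ m) y)) :=
      ((B ^ m).continuous.tendsto y).comp hy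
    have hlim2 : Tendsto (fun N => dist ((B ^ m) (Sp N)) ((B ^ m) (z i))) atTop
        (nhds (dist ((B ^ m) y) ((B ^ m) (z i)))) := hlim.dist tendsto_const_nhds
    apply le_of_tendsto hlim2
    filter_upwards [Filter.eventually_ge_atTop (i + 1)] with N hN
    have hmem : i ∈ Finset.range N := Finset.mem_range.mpr (by omega)
    have hsplit : (B ^ m) (Sp N) - (B ^ m) (z i) = ∑ l ∈ (Finset.range N).erase i, (B ^ m) (z l) := by
      rw [hSpdef]
      simp only []
      rw [map_sum, ← Finset.sum_erase_add _ _ hmem]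
      abel
    rw [hd0, hsplit]
    calc dist (∑ l ∈ (Finset.range N).erase i, (B ^ m) (z l)) 0
        ≤ ∑ l ∈ (Finset.range N).erase i, dist ((B ^ m) (z l)) 0 := hsum _ _
      _ ≤ ∑ l ∈ (Finset.range N).erase i, (if i < l then ((1:ℝ)/2) ^ l else 0) := by
          apply Finset.sum_le_sum
          intro l hl
          obtain ⟨hne, hlN⟩ := Finset.mem_erase.mp hl
          rcases Nat.lt_or_ge i l with h | h
          · rw [if_pos h]; exact hs l h
          · rw [if_neg (by omega), h0 l h hne, dist_self]
      _ ≤ ∑ l ∈ Finset.range N, (if i < l then ((1:ℝ)/2) ^ l else 0) := by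
          apply Finset.sum_le_sum_of_subset_of_nonneg (Finset.erase_subset _ _)
          intro l _ _
          split <;> positivity
      _ = ∑ l ∈ Finset.Ico (i + 1) N, ((1:ℝ)/2) ^ l := by
          rw [← Finset.sum_filter]
          congr 1
          ext l
          simp only [Finset.mem_filter, Finset.mem_range, Finset.mem_Ico]
          omega
      _ ≤ ((1:ℝ)/2) ^ i := geom_tail_le i N
  -- key estimates for y
  have hA1 : ∀ i, dist ((B ^ (Mq i)) y) 0 ≤ (1/2) ^ i := by
    intro i
    have hzi : (B ^ (Mq i)) (z i) = 0 := hz_kill i (Mq i) le_rfl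
    have := hcore (Mq i) i
      (fun l hl _ => hz_kill l (Mq i) (hMmono.monotone hl))
      (fun l hl => by
        obtain ⟨l', rfl⟩ : ∃ l', l = l' + 1 := ⟨l - 1, by omega⟩
        exact hz_m l' (Mq i) (by
          have : Mq i ≤ Mq l' := hMmono.monotone (by omega)
          omega))
    rwa [hzi] at this
  have hA2 : ∀ i, ε / 2 - (1/2) ^ i ≤ dist ((B ^ (nu i)) y) 0 := by
    intro i
    have hcl := hcore (nu i) i
      (fun l hl hne => hz_kill l (nu i) (by
        have h1 : Mq l ≤ Mq (i - 1) := hMmono.monotone (by omega)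
        have h2 := hMnu (i - 1)
        have h3 : i - 1 + 1 = i := by omega
        rw [h3] at h2
        omega))
      (fun l hl => by
        obtain ⟨l', rfl⟩ : ∃ l', l = l' + 1 := ⟨l - 1, by omega⟩
        exact hz_m l' (nu i) (by
          have h1 : Mq i ≤ Mq l' := hMmono.monotone (by omega)
          have h2 := hnuM i
          omega))
    have htri : dist ((B ^ (nu i)) (z i)) 0 ≤ dist ((B ^ (nu i)) y) ((B ^ (nu i)) (z i)) + dist ((B ^ (nu i)) y) 0 := by
      calc dist ((B ^ (nu i)) (z i)) 0 ≤ dist ((B ^ (nu i)) (z i)) ((B ^ (nu i)) y) + dist ((B ^ (nu i)) y) 0 := dist_triangle _ _ _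
        _ = dist ((B ^ (nu i)) y) ((B ^ (nu i)) (z i)) + dist ((B ^ (nu i)) y) 0 := by rw [dist_comm ((B ^ (nu i)) (z i))]
    have := hz_big i
    linarith
  -- y's orbit goes to 0 along Mq
  have hy_to0 : Tendsto (fun i => (B ^ (Mq i)) y) atTop (nhds 0) := by
    rw [tendsto_iff_dist_tendsto_zero]
    apply squeeze_zero (fun i => dist_nonneg) hA1
    exact tendsto_pow_atTop_nhds_zero_of_lt_one (by norm_num) (by norm_num)
  -- y's orbit does not go to 0
  have hnotto : ¬ Tendsto (fun n : ℕ => (B ^ n) y) atTop (nhds 0) := by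
    intro h
    have h1 : Tendsto (fun i => dist ((B ^ (nu i)) y) 0) atTop (nhds 0) :=
      tendsto_iff_dist_tendsto_zero.mp (h.comp hnutop)
    have h2 : Tendsto (fun i => ε / 2 - (1/2:ℝ) ^ i) atTop (nhds (ε / 2 - 0)) :=
      tendsto_const_nhds.sub (tendsto_pow_atTop_nhds_zero_of_lt_one (by norm_num) (by norm_num))
    have := le_of_tendsto_of_tendsto' h2 h1 hA2
    simp only [sub_zero] at this
    linarith
  have hyne : y ≠ 0 := by
    intro h
    apply hnotto
    rw [h]
    simp only [map_zero]
    exact tendsto_const_nhds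
  -- main Li-Yorke pair criterion
  have hpairlem : ∀ (a b : X) (t : 𝕂) (d : X) (N : ℕ), t ≠ 0 →
      (∀ n, N ≤ n → (B ^ n) d = 0) → a - b = t • y + d → LiYorkePair (⇑B) a b := by
    intro a b t d N ht hd hab
    have key : ∀ n, N ≤ n → dist ((⇑B)^[n] a) ((⇑B)^[n] b) = dist (t • (B ^ n) y) 0 := by
      intro n hn
      rw [hpow, hpow, hd0]
      congr 1
      rw [← map_sub, hab, map_add, ContinuousLinearMap.map_smul, hd n hn, add_zero]
    constructor
    · -- liminf = 0
      have hts : Tendsto (fun i => t • (B ^ (Mq i)) y) atTop (nhds 0) := by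
        have := hy_to0.const_smul t
        rwa [smul_zero] at this
      refine le_antisymm ?_ zero_le
      refine ENNReal.le_of_forall_pos_le_add (fun c hc _ => ?_)
      rw [zero_add]
      apply Filter.liminf_le_of_frequently_le'
      have hdist : Tendsto (fun i => dist (t • (B ^ (Mq i)) y) 0) atTop (nhds 0) :=
        tendsto_iff_dist_tendsto_zero.mp hts
      have hc' : (0:ℝ) < c := hc
      have hev : ∀ᶠ i in atTop, edist ((⇑B)^[Mq i] a) ((⇑B)^[Mq i] b) ≤ (c : ℝ≥0∞) := by
        filter_upwards [hdist.eventually (gt_mem_nhds hc'), hMtop.eventually_ge_atTop N]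
          with i h1 h2
        rw [edist_dist, key _ h2, ← ENNReal.ofReal_coe_nnreal]
        exact ENNReal.ofReal_le_ofReal h1.le
      exact hMtop.frequently hev.frequently
    · -- limsup > 0
      rw [pos_iff_ne_zero]
      intro hls
      apply hnotto
      have h0 : Tendsto (fun n => t • (B ^ n) y) atTop (nhds 0) := by
        rw [EMetric.tendsto_nhds]
        intro c hc
        have hfe : ∀ᶠ n in atTop, edist ((⇑B)^[n] a) ((⇑B)^[n] b) < c := by
          apply Filter.eventually_lt_of_limsup_lt
          · rw [hls]; exact hc
          · exact Filter.isBoundedUnder_of ⟨⊤, fun n => le_top⟩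
        filter_upwards [hfe, Filter.eventually_ge_atTop N] with n h1 h2
        have : edist (t • (B ^ n) y) 0 = edist ((⇑B)^[n] a) ((⇑B)^[n] b) := by
          rw [edist_dist, edist_dist, key n h2]
        rw [this]
        exact h1
      have := h0.const_smul t⁻¹
      simp only [inv_smul_smul₀ ht, smul_zero] at this
      exact this
  -- countable dense set of finitely supported vectors
  obtain ⟨Q𝕂, hQc, hQd⟩ := TopologicalSpace.exists_countable_dense 𝕂
  set φ : ∀ N : ℕ, (Fin N → 𝕂) → X := fun N c => ∑ m : Fin N, c m • E (m : ℕ) with hφdef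
  set D : Set X := ⋃ N : ℕ, φ N '' (Set.univ.pi fun _ => Q𝕂) with hDdef
  have hDcnt : D.Countable := Set.countable_iUnion (fun N =>
    (Set.countable_univ_pi (fun _ => hQc)).image _)
  have hDkill : ∀ v ∈ D, ∃ Nv : ℕ, ∀ n, Nv ≤ n → (B ^ n) v = 0 := by
    intro v hv
    obtain ⟨N, ⟨c, _, rfl⟩⟩ := Set.mem_iUnion.mp hv
    refine ⟨N, fun n hn => ?_⟩
    rw [hφdef]
    simp only []
    rw [map_sum]
    apply Finset.sum_eq_zero
    intro m _
    rw [ContinuousLinearMap.map_smul, hEkill (m : ℕ) n (lt_of_lt_of_le m.isLt hn), smul_zero]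
  have h0D : (0 : X) ∈ D := by
    apply Set.mem_iUnion.mpr ⟨0, ?_⟩
    exact ⟨fun m => m.elim0, by simp, by simp [hφdef]⟩
  have happrox : ∀ (N : ℕ) (v : ℕ → 𝕂) (η : ℝ), 0 < η →
      ∃ c : Fin N → 𝕂, (∀ m, c m ∈ Q𝕂) ∧
        dist (φ N c) (∑ m ∈ Finset.range N, v m • E m) < η := by
    intro N
    induction N with
    | zero =>
      intro v η hη
      exact ⟨fun m => m.elim0, fun m => m.elim0, by simpa [hφdef] using hη⟩
    | succ N ih =>
      intro v η hη
      obtain ⟨c, hc, hcd⟩ := ih v (η / 2) (by positivity)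
      have hopen : IsOpen {sk : 𝕂 | dist (sk • E N) (v N • E N) < η / 2} := by
        have : Continuous fun sk : 𝕂 => dist (sk • E N) (v N • E N) :=
          ((continuous_id.smul continuous_const).dist continuous_const)
        exact isOpen_lt this continuous_const
      have hne : {sk : 𝕂 | dist (sk • E N) (v N • E N) < η / 2}.Nonempty :=
        ⟨v N, by simp only [Set.mem_setOf_eq, dist_self]; positivity⟩
      obtain ⟨q, hqQ, hq⟩ := hQd.exists_mem_open hopen hne
      refine ⟨Fin.snoc c q, ?_, ?_⟩
      · intro m
        refine Fin.lastCases ?_ ?_ m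
        · simpa [Fin.snoc_last] using hqQ
        · intro m'; simpa [Fin.snoc_castSucc] using hc m'
      · rw [hφdef]
        simp only []
        rw [Fin.sum_univ_castSucc, Finset.sum_range_succ]
        simp only [Fin.snoc_castSucc, Fin.snoc_last, Fin.coe_castSucc, Fin.val_last]
        calc dist ((∑ m : Fin N, c m • E (m:ℕ)) + q • E N)
              ((∑ m ∈ Finset.range N, v m • E m) + v N • E N)
            ≤ dist (∑ m : Fin N, c m • E (m:ℕ)) (∑ m ∈ Finset.range N, v m • E m)
              + dist (q • E N) (v N • E N) := hadd2 _ _ _ _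
          _ < η / 2 + η / 2 := add_lt_add hcd hq
          _ = η := by ring
  have hDdense : ∀ (x : X) (r : ℝ), 0 < r → ∃ v ∈ D, dist v x < r := by
    intro x r hr
    obtain ⟨N, hN⟩ := (Metric.tendsto_atTop.mp (hbasis x)) (r / 2) (by positivity)
    have h1 := hN N le_rfl
    obtain ⟨c, hc, hcd⟩ := happrox N (ι x) (r / 2) (by positivity)
    refine ⟨φ N c, Set.mem_iUnion.mpr ⟨N, ⟨c, fun m _ => hc m, rfl⟩⟩, ?_⟩
    calc dist (φ N c) x
        ≤ dist (φ N c) (∑ m ∈ Finset.range N, ι x m • E m)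
          + dist (∑ m ∈ Finset.range N, ι x m • E m) x := dist_triangle _ _ _
      _ < r / 2 + r / 2 := add_lt_add hcd h1
      _ = r := by ring
  obtain ⟨u, hu⟩ := Set.Countable.exists_eq_range hDcnt ⟨0, h0D⟩
  have huD : ∀ i, u i ∈ D := fun i => hu ▸ Set.mem_range_self i
  choose Nu hNu using fun i => hDkill _ (huD i)
  -- small injective scalar sequence
  set sc : ℕ → 𝕂 := fun k => algebraMap ℝ 𝕂 ((1/2) ^ k) with hscdef
  have hpowanti : StrictAnti (fun k : ℕ => ((1:ℝ)/2) ^ k) :=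
    fun j k hjk => pow_lt_pow_right_of_lt_one₀ (by norm_num) (by norm_num) hjk
  have hsc_inj : Function.Injective sc := by
    intro j k hjk
    exact hpowanti.injective ((algebraMap ℝ 𝕂).injective hjk)
  have hsc0 : ∀ k, sc k ≠ 0 := by
    intro k h
    have := (algebraMap ℝ 𝕂).injective (h.trans (map_zero (algebraMap ℝ 𝕂)).symm)
    exact (by positivity : ((1:ℝ)/2) ^ k ≠ 0) this
  have hsc_lim : Tendsto sc atTop (nhds 0) := by
    have h1 : Tendsto (fun k : ℕ => ((1:ℝ)/2) ^ k) atTop (nhds 0) :=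
      tendsto_pow_atTop_nhds_zero_of_lt_one (by norm_num) (by norm_num)
    have h2 := ((continuous_algebraMap ℝ 𝕂).tendsto 0).comp h1
    rw [map_zero] at h2
    exact h2
  have hsmul_lim : Tendsto (fun k => sc k • y) atTop (nhds 0) := by
    have := hsc_lim.smul (tendsto_const_nhds (x := y) (f := atTop))
    simpa using this
  have hext : ∀ j : ℕ, ∃ K, ∀ k ≥ K, dist (sc k • y) 0 < (1/2) ^ j := by
    intro j
    exact (Metric.tendsto_atTop.mp hsmul_lim) ((1/2) ^ j) (by positivity)
  obtain ⟨φx, hφmono, hφP⟩ := extraction_forall_of_eventually' hext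
  set t : ℕ → 𝕂 := fun j => sc (φx j) with htdef
  have ht_inj : Function.Injective t := hsc_inj.comp hφmono.injective
  have ht0 : ∀ j, t j ≠ 0 := fun j => hsc0 _
  have htsmall : ∀ j, dist (t j • y) 0 < (1/2) ^ j := fun j => hφP j
  have hshift : ∀ (v a : X), dist (v + a) v = dist a 0 := by
    intro v a
    have := hinv a 0 v
    rw [zero_add] at this
    rw [← this, add_comm]
  -- the scrambled set
  refine ⟨({a | ∃ i j : ℕ, a = u i + t (Nat.pair i j) • y} ∪
      {a | ∃ c : 𝕂, c ∉ Set.range t ∧ c ≠ 0 ∧ a = c • y}), ?_, ?_, ?_⟩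
  · -- dense
    rw [Metric.dense_iff]
    intro x r hr
    obtain ⟨v, hvD, hvx⟩ := hDdense x (r / 2) (by positivity)
    obtain ⟨i, rfl⟩ : ∃ i, u i = v := by
      have : v ∈ Set.range u := hu ▸ hvD
      exact this
    obtain ⟨j, hj⟩ := exists_pow_lt_of_lt_one (show (0:ℝ) < r / 2 by positivity)
      (show (1:ℝ)/2 < 1 by norm_num)
    refine ⟨u i + t (Nat.pair i j) • y, ⟨?_, Or.inl ⟨i, j, rfl⟩⟩⟩
    rw [Metric.mem_ball]
    have h1 : dist (u i + t (Nat.pair i j) • y) (u i) < (1/2) ^ j := by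
      rw [hshift]
      exact lt_of_lt_of_le (htsmall _)
        (pow_le_pow_of_le_one (by norm_num) (by norm_num) (Nat.right_le_pair i j))
    calc dist (u i + t (Nat.pair i j) • y) x
        ≤ dist (u i + t (Nat.pair i j) • y) (u i) + dist (u i) x := dist_triangle _ _ _
      _ < (1/2) ^ j + r / 2 := add_lt_add h1 hvx
      _ < r := by linarith
  · -- uncountable
    intro hcnt
    have hinjOn : Set.InjOn (fun c : 𝕂 => c • y) {c : 𝕂 | c ∉ Set.range t ∧ c ≠ 0} := by
      intro c1 _ c2 _ he
      by_contra hne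
      apply hyne
      have hs0 : (c1 - c2) • y = 0 := by
        rw [sub_smul]
        simp only at he
        rw [he, sub_self]
      have := congrArg (fun v => (c1 - c2)⁻¹ • v) hs0
      simpa [inv_smul_smul₀ (sub_ne_zero.mpr hne)] using this
    have himg : ((fun c : 𝕂 => c • y) '' {c : 𝕂 | c ∉ Set.range t ∧ c ≠ 0}).Countable := by
      apply hcnt.mono
      rintro a ⟨c, ⟨hc1, hc2⟩, rfl⟩
      exact Or.inr ⟨c, hc1, hc2, rfl⟩
    have hTcnt : ({c : 𝕂 | c ∉ Set.range t ∧ c ≠ 0}).Countable :=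
      Set.countable_of_injective_of_countable_image hinjOn himg
    have huniv : (Set.univ : Set 𝕂).Countable := by
      have hss : (Set.univ : Set 𝕂) ⊆
          {c : 𝕂 | c ∉ Set.range t ∧ c ≠ 0} ∪ (Set.range t ∪ {0}) := by
        intro c _
        by_cases h1 : c ∈ Set.range t
        · exact Or.inr (Or.inl h1)
        by_cases h2 : c = 0
        · exact Or.inr (Or.inr h2)
        · exact Or.inl ⟨h1, h2⟩
      exact Set.Countable.mono hss
        (Set.Countable.union hTcnt ((Set.countable_range t).union (Set.countable_singleton 0)))
    have hreal : (Set.univ : Set ℝ).Countable := by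
      have := huniv.preimage (algebraMap ℝ 𝕂).injective
      simpa using this
    exact Cardinal.not_countable_real hreal
  · -- pairwise Li-Yorke
    rintro a (⟨i, j, rfl⟩ | ⟨c, hc1, hc2, rfl⟩) b (⟨i', j', rfl⟩ | ⟨c', hc1', hc2', rfl⟩) hab
    · have hkk : Nat.pair i j ≠ Nat.pair i' j' := by
        intro h
        apply hab
        obtain ⟨h1, h2⟩ := Nat.pair_eq_pair.mp h
        rw [h1, h2]
      apply hpairlem _ _ (t (Nat.pair i j) - t (Nat.pair i' j')) (u i - u i')
        (max (Nu i) (Nu i')) (sub_ne_zero.mpr (fun h => hkk (ht_inj h)))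
      · intro n hn
        rw [map_sub, hNu i n (le_trans (le_max_left _ _) hn),
          hNu i' n (le_trans (le_max_right _ _) hn), sub_zero]
      · rw [sub_smul]; abel
    · apply hpairlem _ _ (t (Nat.pair i j) - c') (u i) (Nu i)
        (sub_ne_zero.mpr (fun h => hc1' ⟨Nat.pair i j, h⟩))
      · intro n hn
        exact hNu i n hn
      · rw [sub_smul]; abel
    · apply hpairlem _ _ (c - t (Nat.pair i' j')) (-(u i')) (Nu i')
        (sub_ne_zero.mpr (fun h => hc1 ⟨Nat.pair i' j', h.symm⟩))
      · intro n hn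
        rw [map_neg, hNu i' n hn, neg_zero]
      · rw [sub_smul]; abel
    · apply hpairlem _ _ (c - c') 0 0
        (sub_ne_zero.mpr (fun h => hab (by rw [h])))
      · intro n _
        rw [map_zero]
      · rw [sub_smul]; abel
end
end

section
/- Let X be a Fréchet sequence space over ℤ in which the sequence (e_n)_{n∈ℤ} of canonical vectors is a basis, let w := (w_n)_{n∈ℤ} be a sequence of nonzero scalars, and suppose the bilateral weighted backward shift B_w((x_n)_{n∈ℤ}) := (w_n x_{n+1})_{n∈ℤ} is a well-defined (continuous linear) operator on X. If the sequence (w_{-n} ⋯ w_{-1} e_{-n})_{n∈ℕ} has a subsequence converging to zero in X, then either (a) B_w is densely Li-Yorke chaotic, or (b) lim_{n→∞} B_wⁿ x = 0 for every x ∈ X. -/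
open Filter Topology MeasureTheory ENNReal

noncomputable section

section Aux
variable {𝕂 X : Type} [RCLike 𝕂] [AddCommGroup X] [Module 𝕂 X]
    [MetricSpace X] [ContinuousAdd X] [ContinuousSMul 𝕂 X]
    {ι : X →L[𝕂] (ℤ → 𝕂)} {E : ℤ → X} {w : ℤ → 𝕂} {B : X →L[𝕂] X}

lemma shift_iter (hB : ∀ (x : X) (n : ℤ), ι (B x) n = w n * ι x (n + 1)) :
    ∀ (m : ℕ) (x : X) (n : ℤ),
      ι (B^[m] x) n = (∏ t ∈ Finset.Ico n (n + m), w t) * ι x (n + m) := by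
  intro m
  induction m with
  | zero => intro x n; simp
  | succ m ih =>
    intro x n
    rw [Function.iterate_succ_apply, ih (B x) n, hB x (n + m)]
    have h1 : Finset.Ico n (n + (m+1 : ℕ)) = Finset.Ico n (n + m) ∪ {(n + m : ℤ)} := by
      have : (n + (m+1:ℕ) : ℤ) = (n + m) + 1 := by push_cast; ring
      rw [this]
      rw [show ({(n + m : ℤ)} : Finset ℤ) = Finset.Ico (n+m) ((n+m)+1) by
        rw [show Finset.Ico (n+m:ℤ) ((n+m)+1) = Finset.Icc (n+m) (n+m) from rfl]; simp]
      exact (Finset.Ico_union_Ico_eq_Ico (by omega) (by omega)).symm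
    rw [h1, Finset.prod_union (by simp)]
    have : (n + m + 1 : ℤ) = n + (m+1:ℕ) := by push_cast; ring
    rw [this, Finset.prod_singleton]
    ring

lemma shift_pow_E (hι : Function.Injective ι)
    (hE : ∀ n, ι (E n) = Pi.single n 1)
    (hB : ∀ (x : X) (n : ℤ), ι (B x) n = w n * ι x (n + 1)) (m : ℕ) (k : ℤ) :
    B^[m] (E k) = (∏ t ∈ Finset.Ico (k - m) k, w t) • E (k - m) := by
  apply hι
  funext n
  rw [shift_iter hB m (E k) n]
  rw [_root_.map_smul]
  simp only [Pi.smul_apply, smul_eq_mul, hE]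
  by_cases h : n = k - m
  · subst h
    rw [Pi.single_eq_same]
    have h2 : (k - m + m : ℤ) = k := by ring
    rw [h2, Pi.single_eq_same]
  · rw [Pi.single_eq_of_ne h]
    rw [Pi.single_eq_of_ne (by omega)]
    ring

end Aux

section Aux2
set_option linter.unusedSectionVars false
variable {𝕂 X : Type} [RCLike 𝕂] [AddCommGroup X] [Module 𝕂 X]
    [MetricSpace X] [ContinuousAdd X] [ContinuousSMul 𝕂 X]
    {ι : X →L[𝕂] (ℤ → 𝕂)} {E : ℤ → X} {w : ℤ → 𝕂} {B : X →L[𝕂] X}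

lemma key_tendsto (hι : Function.Injective ι)
    (hE : ∀ n, ι (E n) = Pi.single n 1)
    (hw0 : ∀ n, w n ≠ 0)
    (hB : ∀ (x : X) (n : ℤ), ι (B x) n = w n * ι x (n + 1))
    {n : ℕ → ℕ}
    (hv : Tendsto (fun i : ℕ =>
          (∏ t ∈ Finset.Icc (-(n i : ℤ)) (-1), w t) • E (-(n i : ℤ)))
        atTop (nhds 0))
    (k : ℤ) (K : ℕ) (hk : k ≤ (K : ℤ)) :
    Tendsto (fun i => B^[n i + K] (E k)) atTop (nhds 0) := by
  classical
  -- E k = c⁻¹ • B^[M] (E K)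
  set M : ℕ := (K - k).toNat with hM
  have hMk : ((K : ℤ) - M) = k := by
    rw [hM, Int.toNat_of_nonneg (by omega)]; ring
  have hEk : B^[M] (E K) = (∏ t ∈ Finset.Ico k (K : ℤ), w t) • E k := by
    rw [shift_pow_E hι hE hB M (K : ℤ), hMk]
  set c : 𝕂 := ∏ t ∈ Finset.Ico k (K : ℤ), w t with hc
  have hc0 : c ≠ 0 := Finset.prod_ne_zero_iff.2 fun t _ => hw0 t
  have hEk' : E k = c⁻¹ • B^[M] (E K) := by
    rw [hEk, smul_smul, inv_mul_cancel₀ hc0, one_smul]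
  -- B^[n i + K] (E K) = d • v i
  set d : 𝕂 := ∏ t ∈ Finset.Ico (0 : ℤ) (K : ℤ), w t with hd
  have hBK : ∀ i : ℕ, B^[n i + K] (E K) =
      d • ((∏ t ∈ Finset.Icc (-(n i : ℤ)) (-1), w t) • E (-(n i : ℤ))) := by
    intro i
    rw [shift_pow_E hι hE hB (n i + K) (K : ℤ)]
    have h1 : ((K : ℤ) - (n i + K : ℕ)) = -(n i : ℤ) := by push_cast; ring
    rw [h1]
    have h2 : Finset.Icc (-(n i : ℤ)) (-1) = Finset.Ico (-(n i : ℤ)) 0 := rfl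
    rw [h2, smul_smul]
    congr 1
    have hsplit : (∏ t ∈ Finset.Ico (-(n i:ℤ)) (0:ℤ), w t) * (∏ t ∈ Finset.Ico (0:ℤ) (K:ℤ), w t)
        = ∏ t ∈ Finset.Ico (-(n i:ℤ)) (K:ℤ), w t := by
      rw [← Finset.prod_union (Finset.Ico_disjoint_Ico_consecutive _ _ _),
        Finset.Ico_union_Ico_eq_Ico (by omega) (by omega)]
    rw [← hsplit]
    ring
  -- assemble
  have hcont : Continuous fun u : X => c⁻¹ • B^[M] (d • u) := by
    have h1 : Continuous (B^[M] : X → X) := B.continuous.iterate M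
    exact (h1.comp (continuous_const_smul d)).const_smul c⁻¹
  have h0 : c⁻¹ • B^[M] (d • (0:X)) = 0 := by
    rw [smul_zero, ← FunLike.coe_pow_eq_iterate, map_zero, smul_zero]
  have heq : ∀ i, B^[n i + K] (E k)
      = c⁻¹ • B^[M] (d • ((∏ t ∈ Finset.Icc (-(n i:ℤ)) (-1), w t) • E (-(n i:ℤ)))) := by
    intro i
    rw [hEk']
    have hcomm : B^[n i + K] (c⁻¹ • B^[M] (E K)) = c⁻¹ • B^[M] (B^[n i + K] (E K)) := by
      simp only [← FunLike.coe_pow_eq_iterate, _root_.map_smul]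
      congr 1
      rw [← ContinuousLinearMap.mul_apply, ← ContinuousLinearMap.mul_apply, ← pow_add, ← pow_add,
        add_comm]
    rw [hcomm, hBK i]
  have := (hcont.tendsto 0).comp hv
  simp only [h0] at this
  exact this.congr fun i => (heq i).symm

lemma sum_tendsto (hι : Function.Injective ι)
    (hE : ∀ n, ι (E n) = Pi.single n 1)
    (hw0 : ∀ n, w n ≠ 0)
    (hB : ∀ (x : X) (n : ℤ), ι (B x) n = w n * ι x (n + 1))
    {n : ℕ → ℕ}
    (hv : Tendsto (fun i : ℕ =>
          (∏ t ∈ Finset.Icc (-(n i : ℤ)) (-1), w t) • E (-(n i : ℤ)))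
        atTop (nhds 0))
    (s : Finset ℤ) (f : ℤ → 𝕂) (K : ℕ) (hs : ∀ t ∈ s, t ≤ (K : ℤ)) :
    Tendsto (fun i => B^[n i + K] (∑ t ∈ s, f t • E t)) atTop (nhds 0) := by
  have heq : ∀ i, B^[n i + K] (∑ t ∈ s, f t • E t)
      = ∑ t ∈ s, f t • B^[n i + K] (E t) := by
    intro i
    simp only [← FunLike.coe_pow_eq_iterate, map_sum, _root_.map_smul]
  simp only [heq]
  have h0 : (0 : X) = ∑ t ∈ s, (0 : X) := by simp
  rw [h0]
  exact tendsto_finset_sum s fun t ht => by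
    simpa using (key_tendsto hι hE hw0 hB hv t K (hs t ht)).const_smul (f t)

end Aux2

lemma pettis_aux {X : Type} [TopologicalSpace X] [BaireSpace X] [AddCommGroup X]
    [IsTopologicalAddGroup X] (N : Set X) (hBM : BaireMeasurableSet N)
    (hsub : ∀ a b : X, a ∈ N → b ∈ N → a - b ∈ N) (hnm : ¬ IsMeagre N) :
    ∃ V : Set X, IsOpen V ∧ (0:X) ∈ V ∧ V ⊆ N := by
  obtain ⟨U, hUo, hUeq⟩ := hBM.residualEq_isOpen
  have hagree : {x : X | (x ∈ N) = (x ∈ U)} ∈ residual X := hUeq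
  have hUN : IsMeagre (U \ N) := by
    rw [IsMeagre]
    refine Filter.mem_of_superset hagree ?_
    intro x hx
    simp only [Set.mem_setOf_eq] at hx
    simp only [Set.mem_compl_iff, Set.mem_diff]
    rintro ⟨hxU, hxN⟩
    exact hxN (hx ▸ hxU)
  have hNU : IsMeagre (N \ U) := by
    rw [IsMeagre]
    refine Filter.mem_of_superset hagree ?_
    intro x hx
    simp only [Set.mem_setOf_eq] at hx
    simp only [Set.mem_compl_iff, Set.mem_diff]
    rintro ⟨hxN, hxU⟩
    exact hxU (hx ▸ hxN)
  have hUne : U.Nonempty := by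
    rcases Set.eq_empty_or_nonempty U with h | h
    · exfalso
      apply hnm
      have : N ⊆ N \ U := by intro x hx; exact ⟨hx, by simp [h]⟩
      exact hNU.mono this
    · exact h
  obtain ⟨u₀, hu₀⟩ := hUne
  refine ⟨(· + u₀) ⁻¹' U, hUo.preimage (by continuity), by simpa using hu₀, ?_⟩
  intro z hz
  have hzu : z + u₀ ∈ U := hz
  -- U₂ := translate of U by z
  set T := Homeomorph.subRight z with hT
  have hU₂o : IsOpen (T ⁻¹' U) := hUo.preimage T.continuous
  have hzU₂ : z + u₀ ∈ T ⁻¹' U := by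
    simp only [Set.mem_preimage, hT, Homeomorph.subRight_apply]
    simpa using hu₀
  have hM₂ : IsMeagre (T ⁻¹' (U \ N)) := hUN.preimage_of_isOpenMap T.continuous T.isOpenMap
  -- residual set
  have hres : (U \ N)ᶜ ∩ (T ⁻¹' (U \ N))ᶜ ∈ residual X :=
    Filter.inter_mem hUN hM₂
  have hdense : Dense ((U \ N)ᶜ ∩ (T ⁻¹' (U \ N))ᶜ) := dense_of_mem_residual hres
  obtain ⟨p, hpUU, hpG⟩ := hdense.inter_open_nonempty (U ∩ T ⁻¹' U)
    (hUo.inter hU₂o) ⟨z + u₀, hzu, hzU₂⟩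
  obtain ⟨hpU, hpU₂⟩ := hpUU
  obtain ⟨hpG1, hpG2⟩ := hpG
  have hpN : p ∈ N := by
    by_contra h
    exact hpG1 ⟨hpU, h⟩
  have hpzN : p - z ∈ N := by
    by_contra h
    exact hpG2 ⟨hpU₂, h⟩
  have : p - (p - z) ∈ N := hsub _ _ hpN hpzN
  simpa using this
set_option maxHeartbeats 1600000 in
theorem bilateral_shift_frechet_dichotomy
    {𝕂 X : Type} [RCLike 𝕂] [AddCommGroup X] [Module 𝕂 X]
    [MetricSpace X] [CompleteSpace X] [ContinuousAdd X] [ContinuousSMul 𝕂 X]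
    [Module ℝ X] [IsScalarTower ℝ 𝕂 X] [LocallyConvexSpace ℝ X]
    (hinv : ∀ x y z : X, dist (x + z) (y + z) = dist x y)
    -- `X` is a Fréchet sequence space over `ℤ`
    (ι : X →L[𝕂] (ℤ → 𝕂)) (hι : Function.Injective ι)
    -- the canonical vectors belong to `X` and form a basis
    (E : ℤ → X) (hE : ∀ n, ι (E n) = Pi.single n 1)
    (hbasis : ∀ x : X,
      Tendsto (fun N : ℕ => ∑ m ∈ Finset.Icc (-(N : ℤ)) (N : ℤ), ι x m • E m)
        atTop (nhds x))
    (w : ℤ → 𝕂) (hw0 : ∀ n, w n ≠ 0)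
    (B : X →L[𝕂] X) (hB : ∀ (x : X) (n : ℤ), ι (B x) n = w n * ι x (n + 1))
    -- `(w₋ₙ ⋯ w₋₁ e₋ₙ)ₙ` has a subsequence converging to zero
    (hsub : ∃ n : ℕ → ℕ, StrictMono n ∧
      Tendsto (fun i : ℕ =>
          (∏ t ∈ Finset.Icc (-(n i : ℤ)) (-1), w t) • E (-(n i : ℤ)))
        atTop (nhds 0)) :
    DenselyLiYorkeChaotic (⇑B) ∨
      ∀ x : X, Tendsto (fun n : ℕ => (⇑B)^[n] x) atTop (nhds 0) := by
  classical
  -- instances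
  have hneg_iso : Isometry (fun x : X => -x) := by
    apply Isometry.of_dist_eq
    intro a b
    have h1 := hinv (-a) (-b) (a + b)
    have h2 : -a + (a + b) = b := by abel
    have h3 : -b + (a + b) = a := by abel
    rw [h2, h3] at h1
    rw [← h1, dist_comm]
  haveI : ContinuousNeg X := ⟨hneg_iso.continuous⟩
  haveI : IsTopologicalAddGroup X := ⟨⟩
  haveI : ContinuousSMul ℝ X := by
    refine ⟨?_⟩
    have heq : (fun p : ℝ × X => p.1 • p.2) = fun p : ℝ × X => (p.1 • (1:𝕂)) • p.2 := by
      funext p; rw [smul_one_smul]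
    rw [heq]
    exact (continuous_fst.smul continuous_const).smul continuous_snd
  -- metric translation lemmas
  have hd0 : ∀ p q : X, dist p q = dist (p - q) 0 := by
    intro p q
    have h1 := hinv (p - q) 0 q
    rw [sub_add_cancel, zero_add] at h1
    exact h1
  have hnegd : ∀ p : X, dist (-p) 0 = dist p 0 := by
    intro p
    have := hneg_iso.dist_eq p 0
    simpa using this
  have hdadd : ∀ p q : X, dist (p + q) 0 ≤ dist p 0 + dist q 0 := by
    intro p q
    have h1 : dist (p + q) q = dist p 0 := by
      have h2 := hinv p 0 q
      rwa [zero_add] at h2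
    calc dist (p + q) 0 ≤ dist (p + q) q + dist q 0 := dist_triangle _ _ _
      _ = dist p 0 + dist q 0 := by rw [h1]
  have hpow : ∀ (mm : ℕ) (x : X), (⇑B)^[mm] x = (B ^ mm) x :=
    fun mm x => (congrFun (FunLike.coe_pow_eq_iterate B mm) x).symm
  set N : Set X := {x : X | Tendsto (fun nn : ℕ => (⇑B)^[nn] x) atTop (nhds 0)} with hNdef
  by_cases hall : ∀ x : X, x ∈ N
  · exact Or.inr hall
  push_neg at hall
  obtain ⟨x₀, hx₀⟩ := hall
  left
  obtain ⟨n, hnmono, hv⟩ := hsub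
  -- N is a subgroup-like set
  have hN0 : (0:X) ∈ N := by
    have : ∀ nn : ℕ, (⇑B)^[nn] (0:X) = 0 := fun nn => by rw [hpow, map_zero]
    simp only [hNdef, Set.mem_setOf_eq, this]
    exact tendsto_const_nhds
  have hNsub : ∀ a b : X, a ∈ N → b ∈ N → a - b ∈ N := by
    intro a b ha hb
    have heq : ∀ nn : ℕ, (⇑B)^[nn] (a - b) = (⇑B)^[nn] a - (⇑B)^[nn] b := by
      intro nn; rw [hpow, hpow, hpow, map_sub]
    simp only [hNdef, Set.mem_setOf_eq, heq]
    simpa using Filter.Tendsto.sub ha hb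
  have hNsmulK : ∀ (c : 𝕂) (z : X), z ∈ N → c • z ∈ N := by
    intro c z hz
    have heq : ∀ nn : ℕ, (⇑B)^[nn] (c • z) = c • (⇑B)^[nn] z := by
      intro nn; rw [hpow, hpow, _root_.map_smul]
    simp only [hNdef, Set.mem_setOf_eq, heq]
    simpa using hz.const_smul c
  have hNsmulR : ∀ (c : ℝ) (z : X), z ∈ N → c • z ∈ N := by
    intro c z hz
    have : c • z = (c • (1:𝕂)) • z := (smul_one_smul 𝕂 c z).symm
    rw [this]
    exact hNsmulK _ _ hz
  -- N is Baire measurable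
  have hNBM : BaireMeasurableSet N := by
    have hNeq : N = ⋂ (j:ℕ), ⋃ (mm:ℕ),
        {x : X | ∀ nn, mm ≤ nn → dist ((⇑B)^[nn] x) 0 ≤ 1/(j+1)} := by
      ext x
      simp only [hNdef, Set.mem_setOf_eq, Set.mem_iInter, Set.mem_iUnion]
      constructor
      · intro hx j
        obtain ⟨mm, hmm⟩ := Metric.tendsto_atTop.mp hx (1/(j+1)) (by positivity)
        exact ⟨mm, fun nn h => (hmm nn h).le⟩
      · intro hx
        rw [Metric.tendsto_atTop]
        intro ε hε
        obtain ⟨j, hj⟩ := exists_nat_one_div_lt hε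
        obtain ⟨mm, hmm⟩ := hx j
        exact ⟨mm, fun nn h => lt_of_le_of_lt (hmm nn h) (by exact_mod_cast hj)⟩
    rw [hNeq]
    apply BaireMeasurableSet.iInter
    intro j
    apply BaireMeasurableSet.iUnion
    intro mm
    have hclosed : IsClosed {x : X | ∀ nn, mm ≤ nn → dist ((⇑B)^[nn] x) 0 ≤ 1/(j+1)} := by
      have heq2 : {x : X | ∀ nn, mm ≤ nn → dist ((⇑B)^[nn] x) 0 ≤ 1/(j+1)}
          = ⋂ (nn:ℕ), ⋂ (_ : mm ≤ nn), {x : X | dist ((⇑B)^[nn] x) 0 ≤ 1/(j+1)} := by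
        ext x; simp
      rw [heq2]
      exact isClosed_iInter fun nn => isClosed_iInter fun _ =>
        isClosed_le ((B.continuous.iterate nn).dist continuous_const) continuous_const
    exact (hclosed.isOpen_compl.baireMeasurableSet).of_compl
  -- N is meagre
  have hNmeag : IsMeagre N := by
    by_contra hnm
    obtain ⟨V, hVo, hV0, hVN⟩ := pettis_aux N hNBM hNsub hnm
    apply hx₀
    have htend : Tendsto (fun j : ℕ => (1/((j:ℝ)+1)) • x₀) atTop (nhds 0) := by
      have h1 : Tendsto (fun j : ℕ => (1/((j:ℝ)+1))) atTop (nhds 0) :=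
        tendsto_one_div_add_atTop_nhds_zero_nat
      simpa using h1.smul_const x₀
    obtain ⟨j, hj⟩ := (htend.eventually_mem (hVo.mem_nhds hV0)).exists
    have h1 : ((1/((j:ℝ)+1))) • x₀ ∈ N := hVN hj
    have h2 := hNsmulR ((j:ℝ)+1) _ h1
    rwa [smul_smul, mul_one_div, div_self (by positivity), one_smul] at h2
  -- countable dense subset of 𝕂
  obtain ⟨C, hCc, hCd⟩ := TopologicalSpace.exists_countable_dense 𝕂
  haveI := hCc.to_subtype
  -- countable dense set Q of finitely supported vectors
  set Q : Set X := {x : X | ∃ (K:ℕ) (f : ℤ → 𝕂), (∀ t, f t ∈ C) ∧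
      x = ∑ t ∈ Finset.Icc (-(K:ℤ)) (K:ℤ), f t • E t} with hQdef
  have hQc : Q.Countable := by
    have hsubQ : Q ⊆ ⋃ (K:ℕ), Set.range
        (fun f : ((Finset.Icc (-(K:ℤ)) (K:ℤ) : Finset ℤ) → C) =>
          ∑ t ∈ (Finset.Icc (-(K:ℤ)) (K:ℤ)).attach, ((f t : 𝕂) • E (t:ℤ))) := by
      rintro x ⟨K, f, hf, rfl⟩
      refine Set.mem_iUnion.2 ⟨K, ⟨fun t => ⟨f t, hf t⟩, ?_⟩⟩
      rw [← Finset.sum_attach (Finset.Icc (-(K:ℤ)) (K:ℤ)) (fun t => f t • E t)]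
    exact Set.Countable.mono hsubQ (Set.countable_iUnion fun K => Set.countable_range _)
  have hQd : Dense Q := by
    have h1 : ∀ z ∈ Submodule.span 𝕂 (Set.range E), z ∈ closure Q := by
      intro z hz
      rw [Finsupp.mem_span_range_iff_exists_finsupp] at hz
      obtain ⟨cc, hcc⟩ := hz
      set K : ℕ := cc.support.sup fun t => t.natAbs with hK
      have hzeq : z = ∑ t ∈ Finset.Icc (-(K:ℤ)) (K:ℤ), cc t • E t := by
        rw [← hcc, Finsupp.sum]
        apply Finset.sum_subset
        · intro t ht
          have h2 : t.natAbs ≤ K := Finset.le_sup (f := fun t : ℤ => t.natAbs) ht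
          simp only [Finset.mem_Icc]
          omega
        · intro t _ hns
          rw [Finsupp.notMem_support_iff.mp hns, zero_smul]
      have hap : ∀ a : 𝕂, ∃ g : ℕ → 𝕂, (∀ j, g j ∈ C) ∧ Tendsto g atTop (nhds a) :=
        fun a => mem_closure_iff_seq_limit.mp (hCd a)
      choose g hg1 hg2 using fun t : ℤ => hap (cc t)
      have hq : ∀ j : ℕ, (∑ t ∈ Finset.Icc (-(K:ℤ)) (K:ℤ), g t j • E t) ∈ Q :=
        fun j => ⟨K, fun t => g t j, fun t => hg1 t j, rfl⟩
      have htend : Tendsto (fun j => ∑ t ∈ Finset.Icc (-(K:ℤ)) (K:ℤ), g t j • E t)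
          atTop (nhds z) := by
        rw [hzeq]
        exact tendsto_finset_sum _ fun t _ => (hg2 t).smul_const (E t)
      exact mem_closure_of_tendsto htend (Filter.Eventually.of_forall hq)
    intro x
    have h2 : x ∈ closure (closure Q) := by
      refine mem_closure_of_tendsto (hbasis x) (Filter.Eventually.of_forall fun NN => ?_)
      exact h1 _ (Submodule.sum_mem _ fun t _ =>
        Submodule.smul_mem _ _ (Submodule.subset_span ⟨t, rfl⟩))
    rwa [closure_closure] at h2
  have hQne : Q.Nonempty := by
    obtain ⟨c₀, hc₀⟩ := hCd.nonempty
    exact ⟨_, 0, fun _ => c₀, fun _ => hc₀, rfl⟩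
  obtain ⟨r, hrQ⟩ := hQc.exists_eq_range hQne
  have hrdense : Dense (Set.range r) := hrQ ▸ hQd
  have hrmem : ∀ a : ℕ, ∃ (K:ℕ) (f : ℤ → 𝕂),
      r a = ∑ t ∈ Finset.Icc (-(K:ℤ)) (K:ℤ), f t • E t := by
    intro a
    have : r a ∈ Q := hrQ ▸ Set.mem_range_self a
    obtain ⟨K, f, _, hf2⟩ := this
    exact ⟨K, f, hf2⟩
  choose Kb fb hfb using hrmem
  have hrtend : ∀ (a : ℕ) (K : ℕ), Kb a ≤ K →
      Tendsto (fun j => (⇑B)^[n j + K] (r a)) atTop (nhds 0) := by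
    intro a K hK
    have h1 := sum_tendsto hι hE hw0 hB hv (Finset.Icc (-(Kb a:ℤ)) (Kb a:ℤ)) (fb a) K
      (fun t ht => by
        simp only [Finset.mem_Icc] at ht
        omega)
    rw [← hfb a] at h1
    exact h1
  -- diagonal subsequence m
  have hstep : ∀ i : ℕ, ∀ᶠ j in atTop, ∀ a ≤ i, Kb a ≤ i →
      dist ((⇑B)^[n j + i] (r a)) 0 < 1/(i+1) := by
    intro i
    have h2 : ∀ᶠ j in atTop, ∀ a ∈ Finset.range (i+1),
        (Kb a ≤ i → dist ((⇑B)^[n j + i] (r a)) 0 < 1/(i+1)) := by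
      rw [eventually_all_finset]
      intro a _
      by_cases hK : Kb a ≤ i
      · have h3 : ∀ᶠ j in atTop, dist ((⇑B)^[n j + i] (r a)) 0 < 1/(i+1) := by
          obtain ⟨NJ, hNJ⟩ := Metric.tendsto_atTop.mp (hrtend a i hK) (1/(i+1)) (by positivity)
          exact eventually_atTop.2 ⟨NJ, hNJ⟩
        exact h3.mono fun j hj _ => hj
      · exact Filter.Eventually.of_forall fun j hc => absurd hc hK
    exact h2.mono fun j hj a ha => hj a (Finset.mem_range.2 (Nat.lt_succ_of_le ha))
  have hdiag : ∃ m : ℕ → ℕ, StrictMono m ∧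
      ∀ a : ℕ, Tendsto (fun i => (⇑B)^[m i] (r a)) atTop (nhds 0) := by
    have hex : ∀ (i J : ℕ), ∃ j, J < j ∧ ∀ a ≤ i, Kb a ≤ i →
        dist ((⇑B)^[n j + i] (r a)) 0 < 1/(i+1) :=
      fun i J => ((eventually_gt_atTop J).and (hstep i)).exists
    choose jf hjf1 hjf2 using hex
    let jj : ℕ → ℕ := fun i => Nat.rec (jf 0 0) (fun i ih => jf (i+1) ih) i
    have hjj : ∀ i, jj (i+1) = jf (i+1) (jj i) := fun i => rfl
    have hjjmono : ∀ i, jj i < jj (i+1) := by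
      intro i; rw [hjj]; exact hjf1 (i+1) (jj i)
    have hall2 : ∀ i, ∀ a ≤ i, Kb a ≤ i →
        dist ((⇑B)^[n (jj i) + i] (r a)) 0 < 1/(i+1) := by
      intro i
      cases i with
      | zero => exact hjf2 0 0
      | succ i => rw [hjj]; exact hjf2 (i+1) (jj i)
    refine ⟨fun i => n (jj i) + i, ?_, ?_⟩
    · apply strictMono_nat_of_lt_succ
      intro i
      have h1 := hnmono (hjjmono i)
      omega
    · intro a
      rw [Metric.tendsto_atTop]
      intro ε hε
      obtain ⟨c, hc⟩ := exists_nat_one_div_lt hε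
      refine ⟨max (max a (Kb a)) c, fun i hi => ?_⟩
      have h2 := hall2 i a (le_trans (le_max_left _ _) (le_trans (le_max_left _ _) hi))
        (le_trans (le_max_right _ _) (le_trans (le_max_left _ _) hi))
      have h3 : (1:ℝ)/(i+1) ≤ 1/(c+1) := by
        apply one_div_le_one_div_of_le (by positivity)
        have : c ≤ i := le_trans (le_max_right _ _) hi
        exact_mod_cast by omega
      calc dist ((⇑B)^[n (jj i) + i] (r a)) 0 < 1/(i+1) := h2
        _ ≤ 1/(c+1) := h3
        _ < ε := by exact_mod_cast hc
  obtain ⟨m, hmmono, hm⟩ := hdiag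
  -- the residual set A and the vector y
  set A : Set X := ⋂ (c : ℕ), ⋂ (b : ℕ), ⋃ i ∈ Set.Ici b,
      {x : X | dist ((⇑B)^[m i] x) 0 < 1/(c+1)} with hAdef
  have hAres : A ∈ residual X := by
    rw [hAdef]
    rw [countable_iInter_mem]
    intro c
    rw [countable_iInter_mem]
    intro b
    apply residual_of_dense_open
    · apply isOpen_biUnion
      intro i _
      exact isOpen_lt ((B.continuous.iterate (m i)).dist continuous_const) continuous_const
    · apply Dense.mono _ hrdense
      rintro x ⟨a, rfl⟩
      obtain ⟨NI, hNI⟩ := Metric.tendsto_atTop.mp (hm a) (1/(c+1)) (by positivity)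
      exact Set.mem_biUnion (Set.mem_Ici.2 (le_max_right NI b))
        (hNI (max NI b) (le_max_left NI b))
  have hAN : (A ∩ Nᶜ).Nonempty :=
    (dense_of_mem_residual (Filter.inter_mem hAres hNmeag)).nonempty
  obtain ⟨y, hyA, hyN⟩ := hAN
  have hyfreq : ∀ γ : ℝ, 0 < γ → ∃ᶠ i in atTop, dist ((⇑B)^[m i] y) 0 < γ := by
    intro γ hγ
    obtain ⟨c, hc⟩ := exists_nat_one_div_lt hγ
    rw [Filter.frequently_atTop]
    intro b
    have h1 := hyA
    rw [hAdef] at h1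
    simp only [Set.mem_iInter] at h1
    have h2 := h1 c b
    simp only [Set.mem_iUnion, Set.mem_Ici, Set.mem_setOf_eq] at h2
    obtain ⟨i, hib, hilt⟩ := h2
    exact ⟨i, hib, lt_trans hilt (by exact_mod_cast hc)⟩
  -- bad parameters
  set Bad : ℕ → ℕ → Set ℝ := fun k l => {τ : ℝ | τ • y + (r k - r l) ∈ N} with hBaddef
  have hBadss : ∀ k l, (Bad k l).Subsingleton := by
    intro k l τ hτ τ' hτ'
    by_contra hne
    have h1 : (τ - τ') • y ∈ N := by
      have h2 := hNsub _ _ hτ hτ'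
      have h3 : (τ • y + (r k - r l)) - (τ' • y + (r k - r l)) = (τ - τ') • y := by
        rw [sub_smul]; abel
      rwa [h3] at h2
    apply hyN
    have h4 := hNsmulR (τ - τ')⁻¹ _ h1
    rwa [smul_smul, inv_mul_cancel₀ (sub_ne_zero.mpr hne), one_smul] at h4
  set Γ : Set ℝ := ⋃ k, ⋃ l, Bad k l with hΓdef
  have hΓc : Γ.Countable :=
    Set.countable_iUnion fun k => Set.countable_iUnion fun l => (hBadss k l).countable
  set W : Submodule ℚ ℝ := Submodule.span ℚ (insert (1:ℝ) Γ) with hWdef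
  have hWc : (W : Set ℝ).Countable := by
    obtain ⟨v, hvr⟩ := (hΓc.insert 1).exists_eq_range ⟨1, Set.mem_insert _ _⟩
    have h1 : W = Submodule.span ℚ (Set.range v) := by rw [hWdef, hvr]
    have h2 : (Submodule.span ℚ (Set.range v) : Set ℝ)
        = Set.range (fun cc : ℕ →₀ ℚ => (Finsupp.linearCombination ℚ v) cc) := by
      rw [← Finsupp.range_linearCombination]
      rfl
    rw [h1, h2]
    exact Set.countable_range _
  have hWdense : Dense (W : Set ℝ) := by
    apply Dense.mono _ Rat.denseRange_cast
    rintro x ⟨q, rfl⟩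
    have h1 : ((q:ℝ)) = q • (1:ℝ) := by simp
    rw [h1]
    exact Submodule.smul_mem _ _ (Submodule.subset_span (Set.mem_insert _ _))
  have hΓW : Γ ⊆ (W : Set ℝ) :=
    fun x hx => Submodule.subset_span (Set.mem_insert_of_mem _ hx)
  obtain ⟨Cc, hCompl⟩ := Submodule.exists_isCompl W
  -- cardinality of the complement
  have hCardCc : Cardinal.continuum ≤ Cardinal.mk Cc := by
    have he : Cardinal.mk (W × Cc) = Cardinal.mk ℝ :=
      Cardinal.mk_congr (Submodule.prodEquivOfIsCompl W Cc hCompl).toEquiv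
    rw [Cardinal.mk_prod, Cardinal.lift_id, Cardinal.lift_id, Cardinal.mk_real] at he
    have hW0 : Cardinal.mk W ≤ Cardinal.aleph0 := by
      haveI := hWc.to_subtype
      exact Cardinal.mk_le_aleph0
    have h3 : Cardinal.continuum ≤ (Cardinal.mk W ⊔ Cardinal.mk Cc) ⊔ Cardinal.aleph0 :=
      he ▸ (Cardinal.mul_le_max _ _)
    have h4 : Cardinal.continuum ≤ Cardinal.mk Cc ⊔ Cardinal.aleph0 := by
      refine le_trans h3 (sup_le (sup_le ?_ le_sup_left) le_sup_right)
      exact le_trans hW0 le_sup_right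
    rcases le_sup_iff.mp h4 with h | h
    · exact h
    · exact absurd h (not_le.2 Cardinal.aleph0_lt_continuum)
  have hembex : Nonempty ((ℕ × ℝ) ↪ Cc) := by
    rw [← Cardinal.le_def]
    refine le_trans ?_ hCardCc
    have h1 : Cardinal.mk (ℕ × ℝ) ≤ Cardinal.mk (ℝ × ℝ) := by
      rw [Cardinal.le_def]
      exact ⟨⟨fun p => ((p.1:ℝ), p.2), fun p q hpq => by
        simp only [Prod.mk.injEq, Nat.cast_inj] at hpq
        exact Prod.ext hpq.1 hpq.2⟩⟩
    refine le_trans h1 ?_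
    rw [Cardinal.mk_prod, Cardinal.lift_id, Cardinal.mk_real,
      Cardinal.mul_eq_self Cardinal.aleph0_le_continuum]
  obtain ⟨emb⟩ := hembex
  -- radii
  have hεex : ∀ k:ℕ, ∃ ε : ℝ, 0 < ε ∧ ∀ τ:ℝ, |τ| < ε →
      dist (τ • y) 0 < 1/(((Nat.unpair k).2:ℝ)+1) := by
    intro k
    have hco : Continuous fun τ:ℝ => τ • y := continuous_id.smul continuous_const
    have h1 := Metric.continuous_iff.mp hco 0 (1/(((Nat.unpair k).2:ℝ)+1)) (by positivity)
    obtain ⟨δ, hδ0, hδ⟩ := h1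
    refine ⟨δ, hδ0, fun τ hτ => ?_⟩
    have h2 := hδ τ (by simpa [Real.dist_eq] using hτ)
    simpa [zero_smul] using h2
  choose εf hεf0 hεf using hεex
  -- the pick function
  have hpickex : ∀ p : ℕ × ℝ, ∃ ρ : ℝ, (0 < ρ ∧ ρ < εf p.1) ∧ ρ - (emb p : ℝ) ∈ W := by
    intro p
    have hIoo : (Set.Ioo (-(emb p : ℝ)) (εf p.1 - (emb p : ℝ))).Nonempty :=
      Set.nonempty_Ioo.mpr (by linarith [hεf0 p.1])
    obtain ⟨q, ⟨hq1, hq2⟩, hqW⟩ := hWdense.inter_open_nonempty _ isOpen_Ioo hIoo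
    exact ⟨(emb p : ℝ) + q, ⟨by linarith, by linarith⟩, by simpa using hqW⟩
  choose pick hpick1 hpickW using hpickex
  have hpickdiff : ∀ p p' : ℕ × ℝ, p ≠ p' → pick p - pick p' ∉ (W : Set ℝ) := by
    intro p p' hne hmem
    have h1 : (pick p - (emb p : ℝ)) - (pick p' - (emb p' : ℝ)) ∈ W :=
      sub_mem (hpickW p) (hpickW p')
    have h2 : (emb p : ℝ) - (emb p' : ℝ) ∈ W := by
      have h3 : (emb p : ℝ) - (emb p' : ℝ)
          = (pick p - pick p') - ((pick p - (emb p:ℝ)) - (pick p' - (emb p':ℝ))) := by ring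
      rw [h3]; exact sub_mem hmem h1
    have h4 : (emb p : ℝ) - (emb p' : ℝ) ∈ Cc := sub_mem (emb p).2 (emb p').2
    have h5 : (emb p : ℝ) - (emb p' : ℝ) = 0 :=
      Submodule.disjoint_def.mp hCompl.disjoint _ h2 h4
    apply hne
    apply emb.injective
    exact Subtype.coe_injective (by linarith [sub_eq_zero.mp h5] : (emb p : ℝ) = emb p')
  have hpick0 : ∀ p p' : ℕ × ℝ, p ≠ p' → pick p ≠ pick p' := by
    intro p p' hne heq
    exact hpickdiff p p' hne (by rw [heq, sub_self]; exact Submodule.zero_mem W)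
  -- the scrambled set S
  set F : ℕ × ℝ → X := fun p => pick p • y + r (Nat.unpair p.1).1 with hFdef
  have hy0 : y ≠ 0 := fun h => hyN (h ▸ hN0)
  -- key: differences are not in N
  have hdiffN : ∀ p q : ℕ × ℝ, p ≠ q → F p - F q ∉ N := by
    intro p q hne hmem
    set τ : ℝ := pick p - pick q with hτdef
    have hzeq : F p - F q = τ • y + (r (Nat.unpair p.1).1 - r (Nat.unpair q.1).1) := by
      rw [hFdef]
      simp only
      rw [hτdef, sub_smul]
      abel
    rw [hzeq] at hmem
    have : τ ∈ Bad (Nat.unpair p.1).1 (Nat.unpair q.1).1 := hmem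
    have hτΓ : τ ∈ Γ := Set.mem_iUnion.2 ⟨_, Set.mem_iUnion.2 ⟨_, this⟩⟩
    exact hpickdiff p q hne (hΓW hτΓ)
  -- liminf property for differences
  have hliminf : ∀ p q : ℕ × ℝ, ∀ η : ℝ, 0 < η →
      ∃ᶠ nn in atTop, dist ((⇑B)^[nn] (F p - F q)) 0 < η := by
    intro p q η hη
    set a := (Nat.unpair p.1).1
    set b := (Nat.unpair q.1).1
    set τ : ℝ := pick p - pick q with hτdef
    have hzeq : F p - F q = τ • y + (r a - r b) := by
      rw [hFdef]; simp only; rw [hτdef, sub_smul]; abel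
    -- continuity of τ-smul at 0
    have hsm : ∃ γ : ℝ, 0 < γ ∧ ∀ u' : X, dist u' 0 < γ → dist (τ • u') 0 < η/3 := by
      have hco : Continuous fun u' : X => τ • u' := continuous_const.smul continuous_id
      obtain ⟨γ, hγ0, hγ⟩ := Metric.continuous_iff.mp hco 0 (η/3) (by positivity)
      exact ⟨γ, hγ0, fun u' hu' => by simpa [smul_zero] using hγ u' hu'⟩
    obtain ⟨γ, hγ0, hγ⟩ := hsm
    have hev : ∀ᶠ i in atTop, dist ((⇑B)^[m i] (r a)) 0 < η/3 ∧
        dist ((⇑B)^[m i] (r b)) 0 < η/3 := by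
      have h1 : ∀ᶠ i in atTop, dist ((⇑B)^[m i] (r a)) 0 < η/3 := by
        obtain ⟨NI, hNI⟩ := Metric.tendsto_atTop.mp (hm a) (η/3) (by positivity)
        exact eventually_atTop.2 ⟨NI, hNI⟩
      have h2 : ∀ᶠ i in atTop, dist ((⇑B)^[m i] (r b)) 0 < η/3 := by
        obtain ⟨NI, hNI⟩ := Metric.tendsto_atTop.mp (hm b) (η/3) (by positivity)
        exact eventually_atTop.2 ⟨NI, hNI⟩
      exact h1.and h2
    have hfr := (hyfreq γ hγ0).and_eventually hev
    have hfr2 : ∃ᶠ i in atTop, dist ((⇑B)^[m i] (F p - F q)) 0 < η := by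
      refine hfr.mono ?_
      rintro i ⟨hy1, hra, hrb⟩
      have hsplit : (⇑B)^[m i] (F p - F q)
          = τ • ((⇑B)^[m i] y) + ((⇑B)^[m i] (r a) - (⇑B)^[m i] (r b)) := by
        rw [hzeq]
        have h1 : τ • y + (r a - r b) = (τ • (1:𝕂)) • y + (r a - r b) := by
          rw [smul_one_smul]
        rw [h1, hpow, map_add, _root_.map_smul, map_sub, ← hpow, ← hpow, ← hpow, smul_one_smul]
      rw [hsplit]
      have hb1 : dist (τ • ((⇑B)^[m i] y)) 0 < η/3 := hγ _ hy1
      have hb2 : dist ((⇑B)^[m i] (r a) - (⇑B)^[m i] (r b)) 0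
          ≤ dist ((⇑B)^[m i] (r a)) 0 + dist ((⇑B)^[m i] (r b)) 0 := by
        rw [sub_eq_add_neg]
        refine le_trans (hdadd _ _) ?_
        rw [hnegd]
      calc dist (τ • ((⇑B)^[m i] y) + ((⇑B)^[m i] (r a) - (⇑B)^[m i] (r b))) 0
          ≤ dist (τ • ((⇑B)^[m i] y)) 0 + dist ((⇑B)^[m i] (r a) - (⇑B)^[m i] (r b)) 0 :=
            hdadd _ _
        _ < η/3 + (η/3 + η/3) := by
            apply add_lt_add_of_lt_of_le hb1
            exact le_trans hb2 (by linarith)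
        _ = η := by ring
    exact hmmono.tendsto_atTop.frequently hfr2
  -- assemble
  refine ⟨Set.range F, ?_, ?_, ?_⟩
  · -- dense
    rw [Metric.dense_iff]
    intro x η hη
    obtain ⟨za, hza1, hza2⟩ := Metric.dense_iff.mp hrdense x (η/2) (by positivity)
    obtain ⟨a, rfl⟩ := hza2
    obtain ⟨b, hb⟩ := exists_nat_one_div_lt (show (0:ℝ) < η/2 by positivity)
    set k := Nat.pair a b with hk
    set p : ℕ × ℝ := (k, 0) with hp
    refine ⟨F p, ?_, Set.mem_range_self p⟩
    have hunp : (Nat.unpair k) = (a, b) := by rw [hk, Nat.unpair_pair]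
    have hFp : F p = pick p • y + r a := by rw [hFdef]; simp only [hp, hunp]
    have hd1 : dist (F p) (r a) = dist (pick p • y) 0 := by
      rw [hFp, hd0]
      congr 1
      abel
    have hd2 : dist (pick p • y) 0 < 1/((b:ℝ)+1) := by
      have := hεf k (pick p) (by
        rw [abs_of_pos (hpick1 p).1]
        exact (hpick1 p).2)
      rwa [hunp] at this
    rw [Metric.mem_ball]
    calc dist (F p) x ≤ dist (F p) (r a) + dist (r a) x := dist_triangle _ _ _
      _ < 1/((b:ℝ)+1) + η/2 := by
          apply add_lt_add
          · rw [hd1]; exact hd2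
          · exact Metric.mem_ball.mp hza1
      _ < η/2 + η/2 := by linarith
      _ = η := by ring
  · -- uncountable
    intro hS
    set g : ℝ → X := fun t => F (0, t) with hgdef
    have hginj : Function.Injective g := by
      intro t t' htt
      by_contra hne
      have hne2 : ((0:ℕ), t) ≠ ((0:ℕ), t') := fun h => hne (by injection h)
      have hτ0 : pick (0,t) - pick (0,t') ≠ 0 := sub_ne_zero.mpr (hpick0 _ _ hne2)
      have h2 : F (0,t) - F (0,t') = (pick (0,t) - pick (0,t')) • y := by
        rw [hFdef]; simp only; rw [sub_smul]; abel
      have h1 : (pick (0, t) - pick (0, t')) • y = 0 := by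
        rw [← h2, show F ((0:ℕ),t) = F ((0:ℕ),t') from htt, sub_self]
      apply hy0
      have h5 := congrArg (fun u : X => (pick (0,t) - pick (0,t'))⁻¹ • u) h1
      simpa [smul_smul, inv_mul_cancel₀ hτ0] using h5
    have h1 : (Set.range g).Countable :=
      hS.mono (by rintro _ ⟨t, rfl⟩; exact ⟨(0,t), rfl⟩)
    have h2 : (g ⁻¹' (Set.range g)).Countable := h1.preimage hginj
    have h3 : (g ⁻¹' (Set.range g)) = Set.univ := by
      ext t; simp [Set.mem_range_self]
    rw [h3] at h2
    exact Cardinal.not_countable_real h2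
  · -- pairwise Li-Yorke
    rintro u ⟨p, rfl⟩ v ⟨q, rfl⟩ huv
    have hpq : p ≠ q := fun h => huv (h ▸ rfl)
    have hedist : ∀ nn:ℕ, edist ((⇑B)^[nn] (F p)) ((⇑B)^[nn] (F q))
        = ENNReal.ofReal (dist ((⇑B)^[nn] (F p - F q)) 0) := by
      intro nn
      rw [edist_dist]
      congr 1
      rw [hd0]
      congr 1
      rw [hpow, hpow, hpow, map_sub]
    constructor
    · -- liminf
      have heq : (fun nn : ℕ => edist ((⇑B)^[nn] (F p)) ((⇑B)^[nn] (F q)))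
          = fun nn : ℕ => ENNReal.ofReal (dist ((⇑B)^[nn] (F p - F q)) 0) := funext hedist
      rw [heq]
      apply le_antisymm _ (zero_le (a := _))
      refine ENNReal.le_of_forall_pos_le_add fun ε hε _ => ?_
      rw [zero_add]
      refine liminf_le_of_frequently_le' ?_
      refine (hliminf p q ε (by exact_mod_cast hε)).mono fun nn hnn => ?_
      calc ENNReal.ofReal (dist ((⇑B)^[nn] (F p - F q)) 0)
          ≤ ENNReal.ofReal (ε:ℝ) := ENNReal.ofReal_le_ofReal hnn.le
        _ = (ε : ℝ≥0∞) := ENNReal.ofReal_coe_nnreal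
    · -- limsup
      have hz := hdiffN p q hpq
      have hnt : ¬ Tendsto (fun nn : ℕ => dist ((⇑B)^[nn] (F p - F q)) 0) atTop (nhds 0) :=
        fun h => hz (tendsto_iff_dist_tendsto_zero.mpr h)
      rw [Metric.tendsto_atTop] at hnt
      push_neg at hnt
      obtain ⟨ε, hε, hfr⟩ := hnt
      have hfr2 : ∃ᶠ nn in atTop, ε ≤ dist ((⇑B)^[nn] (F p - F q)) 0 := by
        rw [Filter.frequently_atTop]
        intro NI
        obtain ⟨nn, hnn1, hnn2⟩ := hfr NI
        refine ⟨nn, hnn1, ?_⟩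
        rwa [Real.dist_eq, sub_zero, abs_of_nonneg dist_nonneg] at hnn2
      have h1 : ENNReal.ofReal ε ≤ limsup
          (fun nn : ℕ => edist ((⇑B)^[nn] (F p)) ((⇑B)^[nn] (F q))) atTop := by
        refine le_limsup_of_frequently_le' ?_
        refine hfr2.mono fun nn hnn => ?_
        rw [hedist nn]
        exact ENNReal.ofReal_le_ofReal hnn
      exact lt_of_lt_of_le (ENNReal.ofReal_pos.mpr hε) h1
end
end
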